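/- arXiv:1103.4075 — 4 statements merged into one kernel-verified Lean document; each statement's English description precedes it below -/
import Mathlib

section
/- Let q and b be complex numbers with 0 < |q| < 1, |b| < 1 and |q| < |b|². Then the bilateral sum Σ_{k∈ℤ} b^{|k|} · [(q^{1+|k|}, b²; q)_∞ / (q, q^{1+|k|}/b²; q)_∞] · ₂φ₁(q^{1+|k|}/b², q/b²; q^{1+|k|}; q, b²) equals the infinite product [(b²;q)_∞/(q/b²;q)_∞] · [(q/b;q)_∞/(b;q)_∞]². (With a = b², this is the equality I_{e,N_f=1;h} = I_{m,N_f=1;h} of superconformal indices of the three-dimensional N=2 U(1) gauge theory with one flavour of R-charge h and its mirror, a free Wess–Zumino theory.) -/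
open scoped BigOperators

/-- The infinite q-Pochhammer symbol `(z;q)_∞ = ∏_{j=0}^∞ (1 - z q^j)`. -/
noncomputable def qPochInf (z q : ℂ) : ℂ := ∏' j : ℕ, (1 - z * q ^ j)

/-- The q-Pochhammer symbol `(z;q)_n = (z;q)_∞ / (z q^n;q)_∞` for `n : ℤ`. -/
noncomputable def qPochInt (z q : ℂ) (n : ℤ) : ℂ :=
  qPochInf z q / qPochInf (z * q ^ n) q

/-- The basic hypergeometric series `₂φ₁(A,B;C;q,Z)`. -/
noncomputable def phi21 (A B C q Z : ℂ) : ℂ :=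
  ∑' n : ℕ, (qPochInt A q n * qPochInt B q n) /
    (qPochInt q q n * qPochInt C q n) * Z ^ n

set_option maxHeartbeats 2000000
set_option linter.unusedVariables false
set_option linter.unusedSectionVars false

open Filter Finset


lemma fac_ne {q z : ℂ} (hq : ‖q‖ ≤ 1) (hz : ‖z‖ < 1) (j : ℕ) : 1 - z * q ^ j ≠ 0 := by
  rw [sub_ne_zero]
  intro h
  have : ‖z * q ^ j‖ < 1 := by
    rw [norm_mul, norm_pow]
    calc ‖z‖ * ‖q‖ ^ j ≤ ‖z‖ * 1 := by
          exact mul_le_mul_of_nonneg_left (pow_le_one₀ (norm_nonneg q) hq) (norm_nonneg z)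
      _ = ‖z‖ := mul_one _
      _ < 1 := hz
  rw [← h, norm_one] at this
  exact lt_irrefl 1 this

lemma log_summable {q z : ℂ} (hq : ‖q‖ < 1) (hz : ‖z‖ < 1) :
    Summable (fun j : ℕ => Complex.log (1 - z * q ^ j)) := by
  apply Summable.of_norm_bounded_eventually (g := fun j => 3 / 2 * (‖z‖ * ‖q‖ ^ j))
  · have := (summable_geometric_of_lt_one (norm_nonneg q) hq).mul_left (3 / 2 * ‖z‖)
    simpa [mul_assoc] using this
  · rw [Nat.cofinite_eq_atTop]
    have h0 : Tendsto (fun j : ℕ => ‖z‖ * ‖q‖ ^ j) atTop (nhds 0) := by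
      simpa using (tendsto_pow_atTop_nhds_zero_of_lt_one (norm_nonneg q) hq).const_mul ‖z‖
    filter_upwards [h0.eventually_le_const (by norm_num : (0:ℝ) < 1/2)] with j hj
    have hn : ‖-(z * q ^ j)‖ ≤ 1 / 2 := by
      rw [norm_neg, norm_mul, norm_pow]; exact hj
    calc ‖Complex.log (1 - z * q ^ j)‖ = ‖Complex.log (1 + -(z * q ^ j))‖ := by ring_nf
      _ ≤ 3 / 2 * ‖-(z * q ^ j)‖ := Complex.norm_log_one_add_half_le_self hn
      _ = 3 / 2 * (‖z‖ * ‖q‖ ^ j) := by rw [norm_neg, norm_mul, norm_pow]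

lemma qpi_hasProd {q z : ℂ} (hq : ‖q‖ < 1) (hz : ‖z‖ < 1) :
    HasProd (fun j : ℕ => 1 - z * q ^ j) (qPochInf z q) :=
  (Complex.multipliable_of_summable_log (log_summable hq hz)).hasProd

lemma qpi_mult {q z : ℂ} (hq : ‖q‖ < 1) (hz : ‖z‖ < 1) :
    Multipliable (fun j : ℕ => 1 - z * q ^ j) := ⟨_, qpi_hasProd hq hz⟩

lemma qpi_ne_zero {q z : ℂ} (hq : ‖q‖ < 1) (hz : ‖z‖ < 1) : qPochInf z q ≠ 0 := by
  have h : Complex.exp (∑' j : ℕ, Complex.log (1 - z * q ^ j)) = ∏' j : ℕ, (1 - z * q ^ j) :=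
    Complex.cexp_tsum_eq_tprod (f := fun j : ℕ => 1 - z * q ^ j)
      (fun j => fac_ne hq.le hz j) (log_summable hq hz)
  rw [qPochInf, ← h]
  exact Complex.exp_ne_zero _

lemma norm_z_qpow_lt {q z : ℂ} (hq : ‖q‖ < 1) (hz : ‖z‖ < 1) (n : ℕ) : ‖z * q ^ n‖ < 1 := by
  rw [norm_mul, norm_pow]
  calc ‖z‖ * ‖q‖ ^ n ≤ ‖z‖ * 1 :=
      mul_le_mul_of_nonneg_left (pow_le_one₀ (norm_nonneg q) hq.le) (norm_nonneg z)
    _ = ‖z‖ := mul_one _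
    _ < 1 := hz

lemma qpi_eq_exp {q z : ℂ} (hq : ‖q‖ < 1) (hz : ‖z‖ < 1) :
    qPochInf z q = Complex.exp (∑' j : ℕ, Complex.log (1 - z * q ^ j)) := by
  have h : Complex.exp (∑' j : ℕ, Complex.log (1 - z * q ^ j)) = ∏' j : ℕ, (1 - z * q ^ j) :=
    Complex.cexp_tsum_eq_tprod (f := fun j : ℕ => 1 - z * q ^ j)
      (fun j => fac_ne hq.le hz j) (log_summable hq hz)
  rw [qPochInf, ← h]

lemma qpi_split {q z : ℂ} (hq : ‖q‖ < 1) (hz : ‖z‖ < 1) (n : ℕ) :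
    qPochInf z q = (∏ j ∈ range n, (1 - z * q ^ j)) * qPochInf (z * q ^ n) q := by
  have hzn := norm_z_qpow_lt hq hz n
  have key : (∑' j : ℕ, Complex.log (1 - z * q ^ n * q ^ j))
      = ∑' j : ℕ, Complex.log (1 - z * q ^ (j + n)) := by
    apply tsum_congr; intro j
    congr 1; rw [pow_add]; ring
  rw [qpi_eq_exp hq hz, qpi_eq_exp hq hzn, key,
    ← (log_summable hq hz).sum_add_tsum_nat_add n, Complex.exp_add, Complex.exp_sum]
  congr 1
  exact Finset.prod_congr rfl fun j _ => Complex.exp_log (fac_ne hq.le hz j)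

lemma qpi_nat {q z : ℂ} (hq : ‖q‖ < 1) (hz : ‖z‖ < 1) (n : ℕ) :
    qPochInt z q (n : ℤ) = ∏ j ∈ range n, (1 - z * q ^ j) := by
  have hzn : ‖z * q ^ n‖ < 1 := by
    rw [norm_mul, norm_pow]
    calc ‖z‖ * ‖q‖ ^ n ≤ ‖z‖ * 1 :=
        mul_le_mul_of_nonneg_left (pow_le_one₀ (norm_nonneg q) hq.le) (norm_nonneg z)
      _ = ‖z‖ := mul_one _
      _ < 1 := hz
  rw [qPochInt, zpow_natCast, qpi_split hq hz n,
    mul_div_assoc, div_self (qpi_ne_zero hq hzn), mul_one]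

-- coefficient machinery
noncomputable def qcoef (z q : ℂ) (M : ℕ) : ℂ :=
  (∏ j ∈ range M, (1 - z * q ^ j)) / (∏ j ∈ range M, (1 - q * q ^ j))

lemma one_sub_ge_exp {x r : ℝ} (hx : 0 ≤ x) (hxr : x ≤ r) (hr : r < 1) :
    Real.exp (-(x / (1 - r))) ≤ 1 - x := by
  have h1x : 0 < 1 - x := by linarith
  have h1r : 0 < 1 - r := by linarith
  have hlog : Real.log (1 - x)⁻¹ ≤ (1 - x)⁻¹ - 1 :=
    Real.log_le_sub_one_of_pos (by positivity)
  have hinv : (1 - x)⁻¹ - 1 = x / (1 - x) := by field_simp; ring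
  have h2 : -(x / (1 - x)) ≤ Real.log (1 - x) := by
    rw [Real.log_inv] at hlog
    rw [hinv] at hlog
    linarith
  have h3 : x / (1 - x) ≤ x / (1 - r) := by
    apply div_le_div_of_nonneg_left hx h1r
    linarith
  calc Real.exp (-(x / (1 - r))) ≤ Real.exp (Real.log (1 - x)) := by
        apply Real.exp_le_exp.2; linarith
    _ = 1 - x := Real.exp_log h1x

lemma geom_partial_le {r : ℝ} (h0 : 0 ≤ r) (h1 : r < 1) (M : ℕ) :
    ∑ j ∈ range M, r ^ j ≤ (1 - r)⁻¹ := by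
  have := Summable.sum_le_tsum (range M) (fun j _ => pow_nonneg h0 j)
    (summable_geometric_of_lt_one h0 h1)
  rwa [tsum_geometric_of_lt_one h0 h1] at this

lemma num_norm_le {q z : ℂ} (hq : ‖q‖ < 1) (M : ℕ) :
    ‖∏ j ∈ range M, (1 - z * q ^ j)‖ ≤ Real.exp (‖z‖ / (1 - ‖q‖)) := by
  rw [norm_prod]
  calc ∏ j ∈ range M, ‖1 - z * q ^ j‖
      ≤ ∏ j ∈ range M, Real.exp (‖z‖ * ‖q‖ ^ j) := by
        apply Finset.prod_le_prod (fun j _ => norm_nonneg _)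
        intro j _
        calc ‖1 - z * q ^ j‖ ≤ ‖(1:ℂ)‖ + ‖z * q ^ j‖ := norm_sub_le _ _
          _ = ‖z‖ * ‖q‖ ^ j + 1 := by rw [norm_one, norm_mul, norm_pow]; ring
          _ ≤ Real.exp (‖z‖ * ‖q‖ ^ j) := Real.add_one_le_exp _
    _ = Real.exp (∑ j ∈ range M, ‖z‖ * ‖q‖ ^ j) := by rw [Real.exp_sum]
    _ ≤ Real.exp (‖z‖ / (1 - ‖q‖)) := by
        apply Real.exp_le_exp.2
        rw [← Finset.mul_sum, div_eq_mul_inv]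
        exact mul_le_mul_of_nonneg_left (geom_partial_le (norm_nonneg q) hq M) (norm_nonneg z)

lemma den_norm_ge {q : ℂ} (hq : ‖q‖ < 1) (M : ℕ) :
    Real.exp (-(‖q‖ / ((1 - ‖q‖) * (1 - ‖q‖)))) ≤ ‖∏ j ∈ range M, (1 - q * q ^ j)‖ := by
  rw [norm_prod]
  have step : ∀ j ∈ range M,
      Real.exp (-(‖q‖ * ‖q‖ ^ j / (1 - ‖q‖))) ≤ ‖1 - q * q ^ j‖ := by
    intro j _
    have hle : ‖q‖ * ‖q‖ ^ j ≤ ‖q‖ := by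
      calc ‖q‖ * ‖q‖ ^ j ≤ ‖q‖ * 1 :=
          mul_le_mul_of_nonneg_left (pow_le_one₀ (norm_nonneg q) hq.le) (norm_nonneg q)
        _ = ‖q‖ := mul_one _
    calc Real.exp (-(‖q‖ * ‖q‖ ^ j / (1 - ‖q‖))) ≤ 1 - ‖q‖ * ‖q‖ ^ j :=
          one_sub_ge_exp (by positivity) hle hq
      _ = ‖(1:ℂ)‖ - ‖q * q ^ j‖ := by rw [norm_one, norm_mul, norm_pow]
      _ ≤ ‖1 - q * q ^ j‖ := norm_sub_norm_le _ _
  calc Real.exp (-(‖q‖ / ((1 - ‖q‖) * (1 - ‖q‖))))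
      ≤ Real.exp (∑ j ∈ range M, -(‖q‖ * ‖q‖ ^ j / (1 - ‖q‖))) := by
        apply Real.exp_le_exp.2
        rw [Finset.sum_neg_distrib, neg_le_neg_iff]
        have h1r : 0 < 1 - ‖q‖ := by linarith
        calc ∑ j ∈ range M, ‖q‖ * ‖q‖ ^ j / (1 - ‖q‖)
            = (∑ j ∈ range M, ‖q‖ ^ j) * (‖q‖ / (1 - ‖q‖)) := by
              rw [Finset.sum_mul]
              apply Finset.sum_congr rfl; intro j _; ring
          _ ≤ (1 - ‖q‖)⁻¹ * (‖q‖ / (1 - ‖q‖)) :=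
              mul_le_mul_of_nonneg_right (geom_partial_le (norm_nonneg q) hq M)
                (by positivity)
          _ = ‖q‖ / ((1 - ‖q‖) * (1 - ‖q‖)) := by field_simp
    _ = ∏ j ∈ range M, Real.exp (-(‖q‖ * ‖q‖ ^ j / (1 - ‖q‖))) := Real.exp_sum _ _
    _ ≤ ∏ j ∈ range M, ‖1 - q * q ^ j‖ :=
        Finset.prod_le_prod (fun j _ => (Real.exp_pos _).le) step

noncomputable def qC (z q : ℂ) : ℝ :=
  Real.exp (‖z‖ / (1 - ‖q‖) + ‖q‖ / ((1 - ‖q‖) * (1 - ‖q‖)))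

lemma qC_pos (z q : ℂ) : 0 < qC z q := Real.exp_pos _

lemma qcoef_norm_le {q z : ℂ} (hq : ‖q‖ < 1) (M : ℕ) : ‖qcoef z q M‖ ≤ qC z q := by
  have hden := den_norm_ge hq M
  have hnum := num_norm_le (z := z) hq M
  rw [qcoef, norm_div]
  rw [qC, Real.exp_add]
  have hpos : (0:ℝ) < Real.exp (-(‖q‖ / ((1 - ‖q‖) * (1 - ‖q‖)))) := Real.exp_pos _
  have hdpos : (0:ℝ) < ‖∏ j ∈ range M, (1 - q * q ^ j)‖ := lt_of_lt_of_le hpos hden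
  rw [div_le_iff₀ hdpos]
  calc ‖∏ j ∈ range M, (1 - z * q ^ j)‖ ≤ Real.exp (‖z‖ / (1 - ‖q‖)) := hnum
    _ = Real.exp (‖z‖ / (1 - ‖q‖)) * Real.exp (‖q‖ / ((1 - ‖q‖) * (1 - ‖q‖)))
        * Real.exp (-(‖q‖ / ((1 - ‖q‖) * (1 - ‖q‖)))) := by
        rw [mul_assoc, ← Real.exp_add]; simp
    _ ≤ Real.exp (‖z‖ / (1 - ‖q‖)) * Real.exp (‖q‖ / ((1 - ‖q‖) * (1 - ‖q‖)))
        * ‖∏ j ∈ range M, (1 - q * q ^ j)‖ := by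
        apply mul_le_mul_of_nonneg_left hden (by positivity)

lemma qden_ne {q : ℂ} (hq : ‖q‖ < 1) (M : ℕ) : (∏ j ∈ range M, (1 - q * q ^ j)) ≠ 0 :=
  Finset.prod_ne_zero_iff.2 fun j _ => fac_ne hq.le hq j

lemma qcoef_zero (z q : ℂ) : qcoef z q 0 = 1 := by simp [qcoef]

lemma qcoef_rec {q z : ℂ} (hq : ‖q‖ < 1) (M : ℕ) :
    qcoef z q (M + 1) * (1 - q * q ^ M) = qcoef z q M * (1 - z * q ^ M) := by
  rw [qcoef, qcoef, prod_range_succ, prod_range_succ]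
  have h1 := qden_ne hq M
  have h2 := fac_ne hq.le hq M
  rw [div_mul_eq_mul_div, div_mul_eq_mul_div, div_eq_div_iff (mul_ne_zero h1 h2) h1]
  ring

lemma qcoef_summable {q z t : ℂ} (hq : ‖q‖ < 1) (ht : ‖t‖ < 1) :
    Summable (fun M : ℕ => qcoef z q M * t ^ M) := by
  apply Summable.of_norm_bounded (g := fun M => qC z q * ‖t‖ ^ M)
    ((summable_geometric_of_lt_one (norm_nonneg t) ht).mul_left _)
  intro M
  rw [norm_mul, norm_pow]
  exact mul_le_mul_of_nonneg_right (qcoef_norm_le hq M) (by positivity)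

lemma qsum_sub_one {q z t : ℂ} (hq : ‖q‖ < 1) (ht : ‖t‖ < 1) :
    ‖(∑' M : ℕ, qcoef z q M * t ^ M) - 1‖ ≤ qC z q / (1 - ‖t‖) * ‖t‖ := by
  have hs := qcoef_summable (z := z) hq ht
  rw [Summable.tsum_eq_zero_add hs, qcoef_zero]
  simp only [pow_zero, mul_one]
  rw [add_sub_cancel_left]
  have hs1 : Summable (fun M : ℕ => qcoef z q (M + 1) * t ^ (M + 1)) :=
    (summable_nat_add_iff 1).2 hs
  calc ‖∑' M : ℕ, qcoef z q (M + 1) * t ^ (M + 1)‖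
      ≤ ∑' M : ℕ, ‖qcoef z q (M + 1) * t ^ (M + 1)‖ := norm_tsum_le_tsum_norm hs1.norm
    _ ≤ ∑' M : ℕ, qC z q * ‖t‖ * ‖t‖ ^ M := by
        apply Summable.tsum_le_tsum _ hs1.norm
          (((summable_geometric_of_lt_one (norm_nonneg t) ht)).mul_left _)
        intro M
        rw [norm_mul, norm_pow, pow_succ]
        calc ‖qcoef z q (M + 1)‖ * (‖t‖ ^ M * ‖t‖) ≤ qC z q * (‖t‖ ^ M * ‖t‖) :=
            mul_le_mul_of_nonneg_right (qcoef_norm_le hq _) (by positivity)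
          _ = qC z q * ‖t‖ * ‖t‖ ^ M := by ring
    _ = qC z q / (1 - ‖t‖) * ‖t‖ := by
        rw [tsum_mul_left, tsum_geometric_of_lt_one (norm_nonneg t) ht]
        field_simp

lemma norm_qt_lt {q t : ℂ} (hq : ‖q‖ < 1) (ht : ‖t‖ < 1) : ‖q * t‖ < 1 := by
  rw [norm_mul]
  calc ‖q‖ * ‖t‖ ≤ 1 * ‖t‖ := mul_le_mul_of_nonneg_right hq.le (norm_nonneg t)
    _ = ‖t‖ := one_mul _
    _ < 1 := ht

lemma qfun_eq {q z t : ℂ} (hq : ‖q‖ < 1) (ht : ‖t‖ < 1) :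
    (1 - t) * ∑' M : ℕ, qcoef z q M * t ^ M
      = (1 - z * t) * ∑' M : ℕ, qcoef z q M * (q * t) ^ M := by
  have hqt : ‖q * t‖ < 1 := norm_qt_lt hq ht
  have sA := qcoef_summable (z := z) hq ht
  have sB := qcoef_summable (z := z) hq hqt
  set A := ∑' M : ℕ, qcoef z q M * t ^ M with hA
  set B := ∑' M : ℕ, qcoef z q M * (q * t) ^ M with hB
  have key : A - B = t * A - z * (t * B) := by
    have h1 : A - B = ∑' M : ℕ, (qcoef z q M * t ^ M - qcoef z q M * (q * t) ^ M) :=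
      (Summable.tsum_sub sA sB).symm
    have h2 : ∑' M : ℕ, (qcoef z q M * t ^ M - qcoef z q M * (q * t) ^ M)
        = ∑' M : ℕ, (qcoef z q M * t ^ M * t - z * (qcoef z q M * (q * t) ^ M * t)) := by
      rw [Summable.tsum_eq_zero_add (sA.sub sB)]
      simp only [pow_zero, mul_one, sub_self, zero_add]
      apply tsum_congr
      intro M
      have hrec := qcoef_rec (z := z) hq M
      rw [pow_succ, pow_succ, mul_pow]
      linear_combination (t ^ M * t) * hrec
    have h3 : ∑' M : ℕ, (qcoef z q M * t ^ M * t - z * (qcoef z q M * (q * t) ^ M * t))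
        = t * A - z * (t * B) := by
      rw [Summable.tsum_sub (sA.mul_right t) ((sB.mul_right t).mul_left z)]
      rw [tsum_mul_right, tsum_mul_left, tsum_mul_right]
      ring
    rw [h1, h2, h3]
  linear_combination key

lemma norm_qpow_t_lt {q t : ℂ} (hq : ‖q‖ < 1) (ht : ‖t‖ < 1) (N : ℕ) : ‖q ^ N * t‖ < 1 := by
  rw [norm_mul, norm_pow]
  calc ‖q‖ ^ N * ‖t‖ ≤ 1 * ‖t‖ :=
      mul_le_mul_of_nonneg_right (pow_le_one₀ (norm_nonneg q) hq.le) (norm_nonneg t)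
    _ = ‖t‖ := one_mul _
    _ < 1 := ht

lemma qfun_iter {q z t : ℂ} (hq : ‖q‖ < 1) (ht : ‖t‖ < 1) (N : ℕ) :
    (∏ j ∈ range N, (1 - t * q ^ j)) * (∑' M : ℕ, qcoef z q M * t ^ M)
      = (∏ j ∈ range N, (1 - z * t * q ^ j)) * ∑' M : ℕ, qcoef z q M * (q ^ N * t) ^ M := by
  induction N with
  | zero => simp
  | succ N ih =>
    rw [prod_range_succ, prod_range_succ]
    have ht' : ‖q ^ N * t‖ < 1 := norm_qpow_t_lt hq ht N
    have step := qfun_eq (z := z) hq ht'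
    rw [show q * (q ^ N * t) = q ^ (N + 1) * t by rw [pow_succ]; ring] at step
    linear_combination (1 - t * q ^ N) * ih
      + (∏ j ∈ range N, (1 - z * t * q ^ j)) * step

lemma qbinom {q z t : ℂ} (hq : ‖q‖ < 1) (ht : ‖t‖ < 1) (hzt : ‖z * t‖ < 1) :
    (∑' M : ℕ, qcoef z q M * t ^ M) = qPochInf (z * t) q / qPochInf t q := by
  set A := ∑' M : ℕ, qcoef z q M * t ^ M with hA
  set S : ℕ → ℂ := fun N => ∑' M : ℕ, qcoef z q M * (q ^ N * t) ^ M with hSdef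
  have key : ∀ N : ℕ, ‖S N - 1‖ ≤ qC z q / (1 - ‖t‖) * ‖t‖ * ‖q‖ ^ N := by
    intro N
    have htN : ‖q ^ N * t‖ < 1 := norm_qpow_t_lt hq ht N
    have h1 : ‖q ^ N * t‖ ≤ ‖t‖ := by
      rw [norm_mul, norm_pow]
      calc ‖q‖ ^ N * ‖t‖ ≤ 1 * ‖t‖ :=
          mul_le_mul_of_nonneg_right (pow_le_one₀ (norm_nonneg q) hq.le) (norm_nonneg t)
        _ = ‖t‖ := one_mul _
    calc ‖S N - 1‖ ≤ qC z q / (1 - ‖q ^ N * t‖) * ‖q ^ N * t‖ := qsum_sub_one hq htN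
      _ ≤ qC z q / (1 - ‖t‖) * ‖q ^ N * t‖ := by
          apply mul_le_mul_of_nonneg_right _ (norm_nonneg _)
          apply div_le_div_of_nonneg_left (qC_pos z q).le (by linarith) (by linarith)
      _ = qC z q / (1 - ‖t‖) * ‖t‖ * ‖q‖ ^ N := by rw [norm_mul, norm_pow]; ring
  have hS : Filter.Tendsto S Filter.atTop (nhds 1) := by
    have h0 : Filter.Tendsto (fun N : ℕ => S N - 1) Filter.atTop (nhds 0) := by
      apply squeeze_zero_norm key
      have := (tendsto_pow_atTop_nhds_zero_of_lt_one (norm_nonneg q) hq).const_mul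
        (qC z q / (1 - ‖t‖) * ‖t‖)
      simpa using this
    have := h0.add (tendsto_const_nhds (x := (1:ℂ)))
    simpa using this
  have hL : Filter.Tendsto (fun N => (∏ j ∈ range N, (1 - t * q ^ j)) * A)
      Filter.atTop (nhds (qPochInf t q * A)) :=
    ((qpi_hasProd hq ht).tendsto_prod_nat).mul_const A
  have hR : Filter.Tendsto (fun N => (∏ j ∈ range N, (1 - z * t * q ^ j)) * S N)
      Filter.atTop (nhds (qPochInf (z * t) q * 1)) :=
    ((qpi_hasProd hq hzt).tendsto_prod_nat).mul hS
  have heq : (fun N => (∏ j ∈ range N, (1 - t * q ^ j)) * A)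
      = fun N => (∏ j ∈ range N, (1 - z * t * q ^ j)) * S N :=
    funext fun N => qfun_iter hq ht N
  have hfin : qPochInf t q * A = qPochInf (z * t) q * 1 :=
    tendsto_nhds_unique (heq ▸ hL) hR
  rw [mul_one] at hfin
  rw [eq_div_iff (qpi_ne_zero hq ht), ← hfin, mul_comm]

noncomputable def Dpr (q : ℂ) (M : ℕ) : ℂ := ∏ j ∈ range M, (1 - q * q ^ j)
noncomputable def Epr (q b : ℂ) (M : ℕ) : ℂ := ∏ j ∈ range M, (1 - q / b ^ 2 * q ^ j)

lemma qcoef_eq_E_div_D (q b : ℂ) (M : ℕ) : qcoef (q / b ^ 2) q M = Epr q b M / Dpr q M := rfl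

lemma Dpr_ne {q : ℂ} (hq : ‖q‖ < 1) (M : ℕ) : Dpr q M ≠ 0 := qden_ne hq M
lemma Epr_ne {q b : ℂ} (hq : ‖q‖ < 1) (hqb2 : ‖q / b ^ 2‖ < 1) (M : ℕ) : Epr q b M ≠ 0 :=
  Finset.prod_ne_zero_iff.2 fun j _ => fac_ne hq.le hqb2 j

section termeval
variable {q b : ℂ} (hq : ‖q‖ < 1) (hb2 : ‖b ^ 2‖ < 1) (hqb2 : ‖q / b ^ 2‖ < 1)

lemma hqm (m : ℕ) : (q : ℂ) ^ (1 + m) = q * q ^ m := by rw [pow_add, pow_one]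
lemma hqmb (m : ℕ) : q ^ (1 + m) / b ^ 2 = q / b ^ 2 * q ^ m := by rw [hqm]; ring

include hq in
lemma e1 (m : ℕ) : qPochInf (q ^ (1 + m)) q = qPochInf q q / Dpr q m := by
  rw [eq_div_iff (Dpr_ne hq m), qpi_split hq hq m, hqm, Dpr]
  ring

include hq hqb2 in
lemma e2 (m : ℕ) : qPochInf (q ^ (1 + m) / b ^ 2) q = qPochInf (q / b ^ 2) q / Epr q b m := by
  rw [eq_div_iff (Epr_ne hq hqb2 m), qpi_split hq hqb2 m, hqmb, Epr]
  ring

include hq hqb2 in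
lemma e3 (m n : ℕ) :
    qPochInt (q ^ (1 + m) / b ^ 2) q (n : ℤ) = Epr q b (m + n) / Epr q b m := by
  have hz : ‖q ^ (1 + m) / b ^ 2‖ < 1 := by rw [hqmb]; exact norm_z_qpow_lt hq hqb2 m
  rw [qpi_nat hq hz n, eq_div_iff (Epr_ne hq hqb2 m), Epr, Epr, Finset.prod_range_add]
  rw [mul_comm]
  congr 1
  apply Finset.prod_congr rfl
  intro j _
  rw [hqmb, pow_add]
  ring

include hq in
lemma e6 (m n : ℕ) :
    qPochInt (q ^ (1 + m)) q (n : ℤ) = Dpr q (m + n) / Dpr q m := by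
  have hz : ‖q ^ (1 + m)‖ < 1 := by rw [hqm]; exact norm_z_qpow_lt hq hq m
  rw [qpi_nat hq hz n, eq_div_iff (Dpr_ne hq m), Dpr, Dpr, Finset.prod_range_add]
  rw [mul_comm]
  congr 1
  apply Finset.prod_congr rfl
  intro j _
  rw [hqm, pow_add]
  ring

include hq hb2 hqb2 in
lemma term_eval (m : ℕ) :
    b ^ m * (qPochInf (q ^ (1 + m)) q * qPochInf (b ^ 2) q) /
      (qPochInf q q * qPochInf (q ^ (1 + m) / b ^ 2) q) *
      phi21 (q ^ (1 + m) / b ^ 2) (q / b ^ 2) (q ^ (1 + m)) q (b ^ 2)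
    = (qPochInf (b ^ 2) q / qPochInf (q / b ^ 2) q) *
      ∑' n : ℕ, (qcoef (q / b ^ 2) q (m + n) * b ^ (m + n)) *
        (qcoef (q / b ^ 2) q n * b ^ n) := by
  rw [phi21, ← tsum_mul_left, ← tsum_mul_left]
  apply tsum_congr
  intro n
  rw [e3 hq hqb2 m n, e6 hq m n, qpi_nat hq hqb2 n, qpi_nat hq hq n,
    ← Epr, ← Dpr, e1 hq m, e2 hq hqb2 m,
    qcoef_eq_E_div_D, qcoef_eq_E_div_D]
  have h1 := Dpr_ne hq m
  have h2 := Dpr_ne hq n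
  have h3 := Dpr_ne hq (m + n)
  have h4 := Epr_ne hq hqb2 m
  have h5 := qpi_ne_zero hq hq
  have h6 := qpi_ne_zero hq hqb2
  field_simp
  ring
end termeval

def mirrorEquiv : ℕ × ℕ ≃ ℤ × ℕ where
  toFun r := if r.2 ≤ r.1 then (((r.1 - r.2 : ℕ) : ℤ), r.2) else (-((r.2 - r.1 : ℕ) : ℤ), r.1)
  invFun p := if 0 ≤ p.1 then (p.1.natAbs + p.2, p.2) else (p.2, p.1.natAbs + p.2)
  left_inv r := by
    obtain ⟨M, N⟩ := r
    dsimp only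
    split_ifs with h1 h2 h3
    · simp only [Int.natAbs_natCast]
      exact Prod.ext (by omega) rfl
    · exact absurd (Int.ofNat_nonneg _) h2
    · exact absurd (by omega : ¬ (0:ℤ) ≤ -((N - M : ℕ) : ℤ)) (by exact fun hh => hh h3)
    · simp only [Int.natAbs_neg, Int.natAbs_natCast]
      exact Prod.ext (by omega) (by omega)
  right_inv p := by
    obtain ⟨k, n⟩ := p
    dsimp only
    split_ifs with h1 h2 h3
    · simp only [Int.natAbs_natCast]
      exact Prod.ext (by push_cast; omega) rfl
    · exact absurd (by omega) h2
    · exact absurd (by omega : k.natAbs + n > n) (by omega)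
    · simp only
      exact Prod.ext (by push_cast; omega) (by omega)


theorem sci_mirror_Nf1_general (q b : ℂ)
    (hq0 : 0 < ‖q‖) (hq1 : ‖q‖ < 1)
    (hb : ‖b‖ < 1) (hqb : ‖q‖ < ‖b‖ ^ 2) :
    (∑' k : ℤ, b ^ |k| *
      (qPochInf (q ^ (1 + |k|)) q * qPochInf (b ^ 2) q) /
      (qPochInf q q * qPochInf (q ^ (1 + |k|) / b ^ 2) q) *
      phi21 (q ^ (1 + |k|) / b ^ 2) (q / b ^ 2) (q ^ (1 + |k|)) q (b ^ 2))
    = (qPochInf (b ^ 2) q / qPochInf (q / b ^ 2) q) *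
      (qPochInf (q / b) q / qPochInf b q) ^ 2 := by
  -- convert hypotheses to norms
  have hq1' : ‖q‖ < 1 := hq1
  have hb' : ‖b‖ < 1 := hb
  have hb0 : b ≠ 0 := by
    intro h
    rw [h] at hqb
    simp only [norm_zero] at hqb
    nlinarith [hq0]
  have hbpos : 0 < ‖b‖ := norm_pos_iff.2 hb0
  have hb2 : ‖b ^ 2‖ < 1 := by
    rw [norm_pow]
    exact pow_lt_one₀ (norm_nonneg b) hb' (by norm_num)
  have hqb2 : ‖q / b ^ 2‖ < 1 := by
    rw [norm_div, norm_pow, div_lt_one (by positivity)]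
    exact hqb
  have hqob : ‖q / b‖ < 1 := by
    rw [norm_div, div_lt_one hbpos]
    calc ‖q‖ < ‖b‖ ^ 2 := hqb
      _ = ‖b‖ * ‖b‖ := sq ‖b‖
      _ ≤ 1 * ‖b‖ := mul_le_mul_of_nonneg_right hb'.le (norm_nonneg b)
      _ = ‖b‖ := one_mul _
  set C : ℝ := qC (q / b ^ 2) q with hC
  have hCnn : (0:ℝ) ≤ C := (qC_pos (q / b ^ 2) q).le
  set v : ℕ → ℂ := fun M => qcoef (q / b ^ 2) q M * b ^ M with hv
  have hv_bound : ∀ M, ‖v M‖ ≤ C * ‖b‖ ^ M := by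
    intro M
    rw [hv]
    simp only [norm_mul, norm_pow]
    exact mul_le_mul_of_nonneg_right (qcoef_norm_le hq1' M) (by positivity)
  have hv_sum : Summable v :=
    Summable.of_norm_bounded (((summable_geometric_of_lt_one (norm_nonneg b) hb').mul_left C)) hv_bound
  set S : ℂ := ∑' M : ℕ, v M with hS
  have hSval : S = qPochInf (q / b) q / qPochInf b q := by
    have h := qbinom (z := q / b ^ 2) (t := b) hq1' hb'
      (by rw [show q / b ^ 2 * b = q / b by field_simp]; exact hqob)
    rw [show q / b ^ 2 * b = q / b by field_simp] at h
    exact h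
  -- the double-indexed family
  set F : ℤ × ℕ → ℂ := fun p => v (p.1.natAbs + p.2) * v p.2 with hF
  have hF_bound : ∀ p : ℤ × ℕ, ‖F p‖ ≤ (C * C * ‖b‖ ^ p.1.natAbs) * (‖b‖ ^ 2) ^ p.2 := by
    intro ⟨k, n⟩
    rw [hF]
    simp only [norm_mul]
    calc ‖v (k.natAbs + n)‖ * ‖v n‖ ≤ (C * ‖b‖ ^ (k.natAbs + n)) * (C * ‖b‖ ^ n) := by
          apply mul_le_mul (hv_bound _) (hv_bound _) (norm_nonneg _)
            (mul_nonneg hCnn (pow_nonneg (norm_nonneg b) _))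
      _ = (C * C * ‖b‖ ^ k.natAbs) * (‖b‖ ^ 2) ^ n := by
          rw [pow_add, ← pow_mul]
          ring
  have habs_sum : Summable (fun k : ℤ => ‖b‖ ^ k.natAbs) := by
    apply Summable.of_nat_of_neg
    · simpa using summable_geometric_of_lt_one (norm_nonneg b) hb'
    · simpa using summable_geometric_of_lt_one (norm_nonneg b) hb'
  have hgeo2 : Summable (fun n : ℕ => (‖b‖ ^ 2) ^ n) :=
    summable_geometric_of_lt_one (by positivity)
      (pow_lt_one₀ (norm_nonneg b) hb' (by norm_num))
  have hFsum : Summable F := by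
    apply Summable.of_norm_bounded _ hF_bound
    have := (habs_sum.mul_left (C * C)).mul_of_nonneg hgeo2
      (fun k => mul_nonneg (mul_nonneg hCnn hCnn) (pow_nonneg (norm_nonneg b) _))
      (fun n => by positivity)
    exact this
  have hFk : ∀ k : ℤ, Summable fun n => F (k, n) := by
    intro k
    apply Summable.of_norm_bounded (hgeo2.mul_left (C * C * ‖b‖ ^ k.natAbs))
    intro n
    exact hF_bound (k, n)
  -- rewrite each term
  have step_k : ∀ k : ℤ, b ^ |k| *
      (qPochInf (q ^ (1 + |k|)) q * qPochInf (b ^ 2) q) /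
      (qPochInf q q * qPochInf (q ^ (1 + |k|) / b ^ 2) q) *
      phi21 (q ^ (1 + |k|) / b ^ 2) (q / b ^ 2) (q ^ (1 + |k|)) q (b ^ 2)
      = (qPochInf (b ^ 2) q / qPochInf (q / b ^ 2) q) * ∑' n : ℕ, F (k, n) := by
    intro k
    have h1 : b ^ |k| = b ^ (k.natAbs) := by
      rw [Int.abs_eq_natAbs, zpow_natCast]
    have h2 : q ^ (1 + |k|) = q ^ (1 + k.natAbs) := by
      rw [Int.abs_eq_natAbs, show (1 : ℤ) + (k.natAbs : ℤ) = ((1 + k.natAbs : ℕ) : ℤ) by push_cast; ring,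
        zpow_natCast]
    rw [h1, h2]
    exact term_eval hq1' hb2 hqb2 k.natAbs
  calc (∑' k : ℤ, b ^ |k| *
      (qPochInf (q ^ (1 + |k|)) q * qPochInf (b ^ 2) q) /
      (qPochInf q q * qPochInf (q ^ (1 + |k|) / b ^ 2) q) *
      phi21 (q ^ (1 + |k|) / b ^ 2) (q / b ^ 2) (q ^ (1 + |k|)) q (b ^ 2))
      = ∑' k : ℤ, (qPochInf (b ^ 2) q / qPochInf (q / b ^ 2) q) * ∑' n : ℕ, F (k, n) :=
        tsum_congr step_k
    _ = (qPochInf (b ^ 2) q / qPochInf (q / b ^ 2) q) * ∑' k : ℤ, ∑' n : ℕ, F (k, n) :=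
        tsum_mul_left
    _ = (qPochInf (b ^ 2) q / qPochInf (q / b ^ 2) q) * ∑' p : ℤ × ℕ, F p := by
        rw [Summable.tsum_prod' hFsum hFk]
    _ = (qPochInf (b ^ 2) q / qPochInf (q / b ^ 2) q) * ∑' r : ℕ × ℕ, F (mirrorEquiv r) := by
        rw [mirrorEquiv.tsum_eq F]
    _ = (qPochInf (b ^ 2) q / qPochInf (q / b ^ 2) q) * ∑' r : ℕ × ℕ, v r.1 * v r.2 := by
        congr 1
        apply tsum_congr
        intro ⟨M, N⟩
        rw [hF, mirrorEquiv]
        by_cases h : N ≤ M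
        · simp only [Equiv.coe_fn_mk, h, if_true, Int.natAbs_natCast]
          rw [show M - N + N = M by omega]
        · simp only [Equiv.coe_fn_mk, h, if_false, Int.natAbs_neg, Int.natAbs_natCast]
          rw [show N - M + M = N by omega]
          ring
    _ = (qPochInf (b ^ 2) q / qPochInf (q / b ^ 2) q) * (S * S) := by
        congr 1
        have hvv : Summable (fun r : ℕ × ℕ => v r.1 * v r.2) := by
          apply Summable.of_norm_bounded
            (((summable_geometric_of_lt_one (norm_nonneg b) hb').mul_left C).mul_of_nonneg
              ((summable_geometric_of_lt_one (norm_nonneg b) hb').mul_left C)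
              (fun M => mul_nonneg hCnn (pow_nonneg (norm_nonneg b) _))
              (fun N => mul_nonneg hCnn (pow_nonneg (norm_nonneg b) _)))
          intro ⟨M, N⟩
          simp only [norm_mul]
          exact mul_le_mul (hv_bound M) (hv_bound N) (norm_nonneg _)
            (mul_nonneg hCnn (pow_nonneg (norm_nonneg b) _))
        rw [Summable.tsum_prod' hvv (fun M => hv_sum.mul_left (v M))]
        calc ∑' M, ∑' N, v M * v N = ∑' M : ℕ, v M * S := by
              apply tsum_congr
              intro M
              exact tsum_mul_left
          _ = S * S := by rw [tsum_mul_right]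
    _ = (qPochInf (b ^ 2) q / qPochInf (q / b ^ 2) q) *
        (qPochInf (q / b) q / qPochInf b q) ^ 2 := by
        rw [hSval]
        ring
end

section
/- (Reflection lemma for the N_f = 1 index.) Let q and b be complex numbers with 0 < |q| < 1, |b| < 1 and |q| < |b|², and let k be a non-negative integer. Then b^{−k} · (b²;q)_∞ / [(q;q)_∞ (q^{1−k}/b²;q)_∞] · Σ_{n=0}^∞ (q/b²;q)_n (q^{1−k}/b²;q)_n (q^{1+n−k};q)_∞ b^{2n} / (q;q)_n = b^{k} · (b²;q)_∞ (q^{1+k};q)_∞ / [(q;q)_∞ (q^{1+k}/b²;q)_∞] · Σ_{n=0}^∞ (q^{1+k}/b²;q)_n (q/b²;q)_n b^{2n} / [(q^{1+k};q)_n (q;q)_n]. (The left-hand side is the k ↦ −k summand of the bilateral index sum, with the singular ratio (q^{1−k};q)_∞/(q^{1−k};q)_n interpreted as (q^{1+n−k};q)_∞; the lemma shows the bilateral sum over negative k equals the sum over positive k.) -/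
open scoped BigOperators

namespace QRefl

noncomputable def qF (z q : ℂ) (n : ℕ) : ℂ := ∏ j ∈ Finset.range n, (1 - z * q ^ j)

variable {q : ℂ}

lemma summable_log (hq : ‖q‖ < 1) (z : ℂ) :
    Summable fun j : ℕ => Complex.log (1 - z * q ^ j) := by
  have hq0 : (0:ℝ) ≤ ‖q‖ := norm_nonneg q
  obtain ⟨N, hN⟩ : ∃ N : ℕ, ‖z‖ * ‖q‖ ^ N ≤ 1/2 := by
    have h := (tendsto_pow_atTop_nhds_zero_of_lt_one hq0 hq).const_mul ‖z‖
    rw [mul_zero] at h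
    exact (h.eventually_le_const (by norm_num : (0:ℝ) < 1/2)).exists
  apply Summable.of_norm_bounded_eventually_nat (g := fun j => (3/2) * (‖z‖ * ‖q‖ ^ j))
  · exact (((summable_geometric_of_lt_one hq0 hq).mul_left ‖z‖).mul_left (3/2))
  · filter_upwards [Filter.eventually_ge_atTop N] with j hj
    have hsmall : ‖-(z * q ^ j)‖ ≤ 1/2 := by
      rw [norm_neg, norm_mul, norm_pow]
      calc ‖z‖ * ‖q‖ ^ j ≤ ‖z‖ * ‖q‖ ^ N := by
            exact mul_le_mul_of_nonneg_left (pow_le_pow_of_le_one hq0 hq.le hj) (norm_nonneg z)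
        _ ≤ 1/2 := hN
    have h2 := Complex.norm_log_one_add_half_le_self hsmall
    rw [norm_neg, norm_mul, norm_pow] at h2
    calc ‖Complex.log (1 - z * q ^ j)‖ = ‖Complex.log (1 + -(z * q ^ j))‖ := by
          rw [sub_eq_add_neg]
      _ ≤ 3/2 * (‖z‖ * ‖q‖ ^ j) := h2

lemma factor_ne_zero {w : ℂ} (hw : ‖w‖ < 1) : (1 : ℂ) - w ≠ 0 := by
  intro h
  rw [sub_eq_zero] at h
  rw [← h] at hw
  simp at hw

lemma multipliable_q (hq : ‖q‖ < 1) (z : ℂ) :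
    Multipliable fun j : ℕ => 1 - z * q ^ j := by
  have hq0 : (0:ℝ) ≤ ‖q‖ := norm_nonneg q
  obtain ⟨N, hN⟩ : ∃ N : ℕ, ‖z‖ * ‖q‖ ^ N < 1/2 := by
    have h := (tendsto_pow_atTop_nhds_zero_of_lt_one hq0 hq).const_mul ‖z‖
    rw [mul_zero] at h
    exact (h.eventually_lt_const (by norm_num : (0:ℝ) < 1/2)).exists
  apply Multipliable.comp_nat_add (k := N)
  have key : (fun j : ℕ => 1 - z * q ^ (j + N)) = fun j : ℕ => 1 - (z * q ^ N) * q ^ j := by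
    funext j; rw [pow_add]; ring
  rw [key]
  have h2 : ∀ j : ℕ, (1 : ℂ) - (z * q ^ N) * q ^ j ≠ 0 := by
    intro j
    apply factor_ne_zero
    rw [norm_mul, norm_mul, norm_pow, norm_pow]
    calc ‖z‖ * ‖q‖ ^ N * ‖q‖ ^ j ≤ ‖z‖ * ‖q‖ ^ N * 1 :=
          mul_le_mul_of_nonneg_left (pow_le_one₀ hq0 hq.le) (by positivity)
      _ = ‖z‖ * ‖q‖ ^ N := mul_one _
      _ < 1 := hN.trans (by norm_num)
  exact Complex.multipliable_of_summable_log (summable_log hq _)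

lemma qPochInf_ne_zero (hq : ‖q‖ < 1) {z : ℂ} (hz : ∀ j : ℕ, 1 - z * q ^ j ≠ 0) :
    qPochInf z q ≠ 0 := by
  have h2 := Complex.cexp_tsum_eq_tprod (f := fun j : ℕ => 1 - z * q ^ j) hz (summable_log hq z)
  rw [qPochInf, ← h2]
  exact Complex.exp_ne_zero _

lemma qPochInf_shift (hq : ‖q‖ < 1) (z : ℂ) (n : ℕ) :
    qPochInf z q = qF z q n * qPochInf (z * q ^ n) q := by
  have key : (fun j : ℕ => 1 - z * q ^ (j + n)) = fun j : ℕ => 1 - (z * q ^ n) * q ^ j := by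
    funext j; rw [pow_add]; ring
  have hm : Multipliable (fun j : ℕ => 1 - z * q ^ (j + n)) := by
    rw [key]; exact multipliable_q hq _
  have h := Multipliable.prod_mul_tprod_nat_mul' (f := fun j : ℕ => 1 - z * q ^ j) (k := n) hm
  rw [qPochInf, ← h, qF, qPochInf, key]

lemma qF_add (z : ℂ) (n m : ℕ) :
    qF z q (n + m) = qF z q n * qF (z * q ^ n) q m := by
  rw [qF, Finset.prod_range_add, qF, qF]
  congr 1
  apply Finset.prod_congr rfl
  intro j _
  rw [pow_add]
  ring

lemma qPochInt_eq_qF (hq : ‖q‖ < 1) (z : ℂ) (n : ℕ)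
    (h : qPochInf (z * q ^ n) q ≠ 0) : qPochInt z q (n : ℤ) = qF z q n := by
  rw [qPochInt, zpow_natCast, qPochInf_shift hq z n, mul_div_assoc, div_self h, mul_one]

lemma qPochInf_zero (hq : ‖q‖ < 1) (hq0 : q ≠ 0) {e : ℤ} (he : e ≤ 0) :
    qPochInf (q ^ e) q = 0 := by
  set N := (-e).toNat with hNdef
  have hN : (N : ℤ) = -e := Int.toNat_of_nonneg (by omega)
  rw [qPochInf_shift hq _ (N + 1)]
  have hz : qF (q ^ e) q (N + 1) = 0 := by
    apply Finset.prod_eq_zero (Finset.mem_range.mpr (Nat.lt_succ_self N))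
    rw [← zpow_natCast q N, ← zpow_add₀ hq0, hN, add_neg_cancel, zpow_zero, sub_self]
  rw [hz, zero_mul]

lemma alg_final {c Pb Pq PR F1k F4 F3k F2 Fqk Fqm F5 u : ℂ}
    (hc : c ≠ 0) (hPq : Pq ≠ 0) (hPR : PR ≠ 0) (hF1k : F1k ≠ 0) (hF3k : F3k ≠ 0)
    (hFqk : Fqk ≠ 0) (hFqm : Fqm ≠ 0) (hF5 : F5 ≠ 0) :
    c⁻¹ * Pb / (Pq * (F3k * (F1k * PR))) *
      (F1k * F4 * (F3k * F2) * (Pq / Fqm) * (u * (c * c)) / (Fqk * F5))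
    = c * (Pb * (Pq / Fqk)) / (Pq * PR) * (F4 * F2 * u / (F5 * Fqm)) := by
  rw [div_mul_div_comm, div_mul_div_comm,
    div_eq_div_iff
      (by simp_all [mul_ne_zero])
      (by simp_all [mul_ne_zero])]
  rw [inv_eq_one_div]
  field_simp

lemma qF_ne_zero {z : ℂ} {n : ℕ} (h : ∀ j : ℕ, 1 - z * q ^ j ≠ 0) : qF z q n ≠ 0 := by
  rw [qF]; exact Finset.prod_ne_zero_iff.mpr (fun j _ => h j)

end QRefl

open QRefl

theorem reflection_lemma_Nf1 (q b : ℂ)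
    (hq0 : 0 < ‖q‖) (hq1 : ‖q‖ < 1)
    (hb : ‖b‖ < 1) (hqb : ‖q‖ < ‖b‖ ^ 2)
    (k : ℕ) :
    b ^ (-(k : ℤ)) * qPochInf (b ^ 2) q /
      (qPochInf q q * qPochInf (q ^ (1 - (k : ℤ)) / b ^ 2) q) *
      (∑' n : ℕ, qPochInt (q / b ^ 2) q n * qPochInt (q ^ (1 - (k : ℤ)) / b ^ 2) q n *
        qPochInf (q ^ (1 + (n : ℤ) - (k : ℤ))) q * b ^ (2 * n) / qPochInt q q n)
    = b ^ (k : ℤ) * (qPochInf (b ^ 2) q * qPochInf (q ^ (1 + (k : ℤ))) q) /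
      (qPochInf q q * qPochInf (q ^ (1 + (k : ℤ)) / b ^ 2) q) *
      (∑' n : ℕ, qPochInt (q ^ (1 + (k : ℤ)) / b ^ 2) q n * qPochInt (q / b ^ 2) q n *
        b ^ (2 * n) / (qPochInt (q ^ (1 + (k : ℤ))) q n * qPochInt q q n)) := by
  have hqn : ‖q‖ < 1 := hq1
  have hq0' : q ≠ 0 := by
    intro h; rw [h] at hq0; simp at hq0
  have hb0 : b ≠ 0 := by
    intro h
    rw [h] at hqb
    simp at hqb
    exact absurd (hq0.trans hqb) (lt_irrefl 0)
  have hqpos : (0:ℝ) < ‖q‖ := hq0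
  have hblt : ‖b‖ ^ 2 < 1 := by
    have : ‖b‖ ^ 2 ≤ ‖b‖ * 1 := by
      rw [sq]; exact mul_le_mul_of_nonneg_left hb.le (norm_nonneg b)
    calc ‖b‖^2 ≤ ‖b‖ * 1 := this
      _ = ‖b‖ := mul_one _
      _ < 1 := hb
  have hqlt : ‖q‖ < ‖b‖ ^ 2 := hqb
  -- b^2 is never an integer power of q
  have hbq : ∀ m : ℤ, q ^ m ≠ b ^ 2 := by
    intro m h
    have hnorm : ‖q‖ ^ m = ‖b‖ ^ 2 := by
      rw [← norm_zpow, h, norm_pow]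
    rcases le_or_gt m 0 with hm | hm
    · have h1 : (1:ℝ) ≤ ‖q‖ ^ m := by
        have := zpow_le_zpow_right_of_le_one₀ hqpos hqn.le hm
        simpa using this
      rw [hnorm] at h1
      exact absurd (h1.trans_lt hblt) (lt_irrefl 1)
    · have h1 : ‖q‖ ^ m ≤ ‖q‖ := by
        have := zpow_le_zpow_right_of_le_one₀ hqpos hqn.le hm
        simpa using this
      rw [hnorm] at h1
      exact absurd (hqlt.trans_le h1) (lt_irrefl _)
  -- factors
  have hzpow_le : ∀ {s : ℤ}, 1 ≤ s → ‖q‖ ^ s ≤ ‖q‖ := by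
    intro s hs
    have := zpow_le_zpow_right_of_le_one₀ hqpos hqn.le hs
    simpa using this
  have hfacq : ∀ (s : ℤ), 1 ≤ s → ∀ j : ℕ, (1:ℂ) - q ^ s * q ^ j ≠ 0 := by
    intro s hs j
    apply factor_ne_zero
    rw [norm_mul, norm_zpow, norm_pow]
    calc ‖q‖ ^ s * ‖q‖ ^ j ≤ ‖q‖ * 1 := by
          apply mul_le_mul (hzpow_le hs) (pow_le_one₀ hqpos.le hqn.le) (by positivity) hqpos.le
      _ = ‖q‖ := mul_one _
      _ < 1 := hqn
  have hfacq' : ∀ j : ℕ, (1:ℂ) - q * q ^ j ≠ 0 := by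
    intro j
    have := hfacq 1 le_rfl j
    rwa [zpow_one] at this
  have hfacd : ∀ (s : ℤ) (j : ℕ), (1:ℂ) - q ^ s / b ^ 2 * q ^ j ≠ 0 := by
    intro s j h
    rw [sub_eq_zero] at h
    apply hbq (s + j)
    rw [zpow_add₀ hq0', zpow_natCast]
    field_simp at h
    linear_combination -h
  have hfacd' : ∀ j : ℕ, (1:ℂ) - q / b ^ 2 * q ^ j ≠ 0 := by
    intro j
    have := hfacd 1 j
    rwa [zpow_one] at this
  -- nonvanishing of infinite products
  have hPpow : ∀ s : ℤ, 1 ≤ s → qPochInf (q ^ s) q ≠ 0 :=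
    fun s hs => qPochInf_ne_zero hqn (hfacq s hs)
  have hPq : qPochInf q q ≠ 0 := qPochInf_ne_zero hqn hfacq'
  have hPdiv : ∀ s : ℤ, qPochInf (q ^ s / b ^ 2) q ≠ 0 :=
    fun s => qPochInf_ne_zero hqn (hfacd s)
  -- power arithmetic
  have hmulpow : ∀ (s : ℤ) (n : ℕ), q ^ s * q ^ n = q ^ (s + n) := by
    intro s n
    rw [← zpow_natCast q n, ← zpow_add₀ hq0']
  have hdivpow : ∀ (s : ℤ) (n : ℕ), q ^ s / b ^ 2 * q ^ n = q ^ (s + n) / b ^ 2 := by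
    intro s n
    rw [div_mul_eq_mul_div, hmulpow]
  have hq1pow : ∀ n : ℕ, q * q ^ n = q ^ (1 + (n:ℤ)) := by
    intro n
    have := hmulpow 1 n
    rwa [zpow_one] at this
  have hqdiv1 : ∀ n : ℕ, q / b ^ 2 * q ^ n = q ^ (1 + (n:ℤ)) / b ^ 2 := by
    intro n
    have := hdivpow 1 n
    rwa [zpow_one] at this
  rw [← tsum_mul_left, ← tsum_mul_left]
  refine Eq.trans (Function.Injective.tsum_eq (g := fun m : ℕ => m + k)
    (add_left_injective k) ?_).symm (tsum_congr ?_)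
  · intro n hn
    rw [Function.mem_support] at hn
    by_contra hnr
    have hnk : n < k := by
      by_contra hge
      exact hnr ⟨n - k, by show n - k + k = n; omega⟩
    apply hn
    have hz : qPochInf (q ^ (1 + (n:ℤ) - (k:ℤ))) q = 0 :=
      qPochInf_zero hqn hq0' (by omega)
    rw [hz]
    ring
  · intro m
    have h1 : qPochInf (q / b ^ 2 * q ^ (m + k)) q ≠ 0 := by
      rw [hqdiv1]; exact hPdiv _
    have h2 : qPochInf (q ^ (1 - (k:ℤ)) / b ^ 2 * q ^ (m + k)) q ≠ 0 := by
      rw [hdivpow]; exact hPdiv _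
    have h3 : qPochInf (q * q ^ (m + k)) q ≠ 0 := by
      rw [hq1pow]; exact hPpow _ (by omega)
    have h4 : qPochInf (q ^ (1 + (k:ℤ)) / b ^ 2 * q ^ m) q ≠ 0 := by
      rw [hdivpow]; exact hPdiv _
    have h5 : qPochInf (q / b ^ 2 * q ^ m) q ≠ 0 := by
      rw [hqdiv1]; exact hPdiv _
    have h6 : qPochInf (q ^ (1 + (k:ℤ)) * q ^ m) q ≠ 0 := by
      rw [hmulpow]; exact hPpow _ (by omega)
    have h7 : qPochInf (q * q ^ m) q ≠ 0 := by
      rw [hq1pow]; exact hPpow _ (by omega)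
    rw [qPochInt_eq_qF hqn (q / b ^ 2) (m + k) h1,
        qPochInt_eq_qF hqn (q ^ (1 - (k:ℤ)) / b ^ 2) (m + k) h2,
        qPochInt_eq_qF hqn q (m + k) h3,
        qPochInt_eq_qF hqn (q ^ (1 + (k:ℤ)) / b ^ 2) m h4,
        qPochInt_eq_qF hqn (q / b ^ 2) m h5,
        qPochInt_eq_qF hqn (q ^ (1 + (k:ℤ))) m h6,
        qPochInt_eq_qF hqn q m h7]
    rw [show (1 + ((m + k : ℕ) : ℤ) - (k:ℤ)) = 1 + (m:ℤ) by push_cast; ring]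
    have hsplit1 : qF (q / b ^ 2) q (m + k)
        = qF (q / b ^ 2) q k * qF (q ^ (1 + (k:ℤ)) / b ^ 2) q m := by
      rw [add_comm m k, qF_add, hqdiv1]
    have hsplit2 : qF (q ^ (1 - (k:ℤ)) / b ^ 2) q (m + k)
        = qF (q ^ (1 - (k:ℤ)) / b ^ 2) q k * qF (q / b ^ 2) q m := by
      rw [add_comm m k, qF_add, hdivpow, show (1 - (k:ℤ) + k) = 1 by ring, zpow_one]
    have hsplit3 : qF q q (m + k) = qF q q k * qF (q ^ (1 + (k:ℤ))) q m := by
      rw [add_comm m k, qF_add, hq1pow]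
    rw [hsplit1, hsplit2, hsplit3]
    have hqFm : qF q q m ≠ 0 := qF_ne_zero hfacq'
    have hqFk : qF q q k ≠ 0 := qF_ne_zero hfacq'
    have hrel1 : qPochInf q q = qF q q m * qPochInf (q ^ (1 + (m:ℤ))) q := by
      have h := qPochInf_shift hqn q m; rwa [hq1pow] at h
    have hrel2 : qPochInf q q = qF q q k * qPochInf (q ^ (1 + (k:ℤ))) q := by
      have h := qPochInf_shift hqn q k; rwa [hq1pow] at h
    have hrel3 : qPochInf (q ^ (1 - (k:ℤ)) / b ^ 2) q
        = qF (q ^ (1 - (k:ℤ)) / b ^ 2) q k * qPochInf (q / b ^ 2) q := by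
      have h := qPochInf_shift hqn (q ^ (1 - (k:ℤ)) / b ^ 2) k
      rwa [hdivpow, show (1 - (k:ℤ) + k) = 1 by ring, zpow_one] at h
    have hrel4 : qPochInf (q / b ^ 2) q
        = qF (q / b ^ 2) q k * qPochInf (q ^ (1 + (k:ℤ)) / b ^ 2) q := by
      have h := qPochInf_shift hqn (q / b ^ 2) k; rwa [hqdiv1] at h
    have hPm : qPochInf (q ^ (1 + (m:ℤ))) q = qPochInf q q / qF q q m := by
      rw [hrel1]; field_simp
    have hPk : qPochInf (q ^ (1 + (k:ℤ))) q = qPochInf q q / qF q q k := by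
      rw [hrel2]; field_simp
    rw [hPm, hPk, hrel3, hrel4]
    have hF1 : qF (q / b ^ 2) q k ≠ 0 := qF_ne_zero hfacd'
    have hF2 : qF (q / b ^ 2) q m ≠ 0 := qF_ne_zero hfacd'
    have hF3 : qF (q ^ (1 - (k:ℤ)) / b ^ 2) q k ≠ 0 := qF_ne_zero (hfacd _)
    have hF4 : qF (q ^ (1 + (k:ℤ)) / b ^ 2) q m ≠ 0 := qF_ne_zero (hfacd _)
    have hF5 : qF (q ^ (1 + (k:ℤ))) q m ≠ 0 := qF_ne_zero (hfacq _ (by omega))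
    have hPR : qPochInf (q ^ (1 + (k:ℤ)) / b ^ 2) q ≠ 0 := hPdiv _
    rw [zpow_neg, zpow_natCast]
    have hbk : b ^ k ≠ 0 := pow_ne_zero k hb0
    rw [show 2 * (m + k) = 2 * m + (k + k) by ring, pow_add, pow_add]
    exact alg_final hbk hPq hPR hF1 hF3 hqFk hqFm hF5
end

section
/- (Factorization of the electric N_f = 2 index.) Let q, a, v be complex numbers with 0 < |q| < 1, |q| < |a| < 1, v ≠ 0, and suppose that neither v² nor a/v² is an integer power of q. Then Σ_{k∈ℤ} a^{|k|} · [(q^{1+|k|}, q^{1+|k|}v², a, a/v²; q)_∞ / (v^{−2}, q^{1+|k|}/a, q^{1+|k|}v²/a, q; q)_∞] · Σ_{n=0}^∞ [(q^{1+|k|}/a, q^{1+|k|}v²/a, q/a, qv²/a; q)_n / (q^{1+|k|}, q^{1+|k|}v², qv², q; q)_n] a^{2n} = (qv², a, a/v²; q)_∞ / (v^{−2}, q/a, qv²/a; q)_∞ · [₂φ₁(qv²/a, q/a; qv²; q, a)]². -/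
open scoped BigOperators

open Complex Filter Topology

namespace ElectricAux

variable {q z X : ℂ}

lemma summable_log_one_sub (hq1 : ‖q‖ < 1) (z : ℂ) :
    Summable fun j : ℕ => Complex.log (1 - z * q ^ j) := by
  have hgeo : Summable fun j : ℕ => (3 / 2 : ℝ) * (‖z‖ * ‖q‖ ^ j) :=
    ((summable_geometric_of_lt_one (norm_nonneg q) hq1).mul_left _).mul_left _
  apply Summable.of_norm_bounded_eventually hgeo
  rw [Nat.cofinite_eq_atTop]
  have h0 : Tendsto (fun j : ℕ => ‖z‖ * ‖q‖ ^ j) atTop (𝓝 0) := by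
    simpa using (tendsto_pow_atTop_nhds_zero_of_lt_one (norm_nonneg q) hq1).const_mul
      (‖z‖)
  filter_upwards [h0.eventually_le_const (by norm_num : (0:ℝ) < 1/2)] with j hj
  have hn : ‖-(z * q ^ j)‖ ≤ 1 / 2 := by
    simpa [norm_mul, norm_pow] using hj
  have := Complex.norm_log_one_add_half_le_self hn
  rw [show (1 : ℂ) + -(z * q ^ j) = 1 - z * q ^ j by ring] at this
  simpa [norm_mul, norm_pow] using this

lemma qPochInf_ne_zero (hq1 : ‖q‖ < 1) (hz : ∀ j : ℕ, 1 - z * q ^ j ≠ 0) :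
    qPochInf z q ≠ 0 := by
  have h2 := Complex.cexp_tsum_eq_tprod (f := fun j : ℕ => 1 - z * q ^ j) hz
    (summable_log_one_sub hq1 z)
  rw [qPochInf, ← h2]
  exact Complex.exp_ne_zero _

lemma multipliable_qPoch (hq1 : ‖q‖ < 1) (hz : ∀ j : ℕ, 1 - z * q ^ j ≠ 0) :
    Multipliable fun j : ℕ => 1 - z * q ^ j :=
  Complex.multipliable_of_summable_log (summable_log_one_sub hq1 z)

lemma shift_ne (hz : ∀ j : ℕ, 1 - X * q ^ j ≠ 0) (K : ℕ) :
    ∀ j : ℕ, 1 - X * q ^ K * q ^ j ≠ 0 := fun j => by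
  have h := hz (K + j)
  rw [pow_add] at h
  convert h using 2
  ring

lemma qPochInf_peel (hq1 : ‖q‖ < 1) (hz : ∀ j : ℕ, 1 - z * q ^ j ≠ 0) :
    qPochInf z q = (1 - z) * qPochInf (z * q) q := by
  have hzq : ∀ j : ℕ, 1 - z * q * q ^ j ≠ 0 := by
    intro j; have := shift_ne hz 1 j; simpa [pow_one] using this
  have M : Multipliable fun n : ℕ => 1 - z * q ^ (n + 1) := by
    have h0 := multipliable_qPoch (z := z * q) hq1 hzq
    exact h0.congr fun n => by rw [pow_succ]; ring
  have h := tprod_eq_zero_mul' (f := fun j : ℕ => 1 - z * q ^ j) M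
  rw [qPochInf, h]
  rw [pow_zero, mul_one, qPochInf]
  congr 1
  apply tprod_congr
  intro j
  rw [pow_succ]
  ring

lemma qPochInt_succ (hq0 : q ≠ 0) (hq1 : ‖q‖ < 1)
    (hz : ∀ j : ℕ, 1 - X * q ^ j ≠ 0) (n : ℕ) :
    qPochInt X q ((n + 1 : ℕ) : ℤ) = qPochInt X q (n : ℤ) * (1 - X * q ^ n) := by
  have hpeel := qPochInf_peel hq1 (shift_ne hz n)
  rw [qPochInt, qPochInt, zpow_natCast, zpow_natCast, hpeel,
    show X * q ^ n * q = X * q ^ (n + 1) by ring]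
  rw [div_mul_eq_mul_div, mul_comm (qPochInf X q), mul_div_mul_left _ _ (hz n)]

lemma qPochInt_split (hq0 : q ≠ 0) {X : ℂ} (hz : ∀ i : ℕ, 1 - X * q ^ i ≠ 0)
    (hq1 : ‖q‖ < 1) (K j : ℕ) :
    qPochInt X q ((j + K : ℕ) : ℤ) =
      (qPochInf X q / qPochInf (X * q ^ K) q) * qPochInt (X * q ^ K) q (j : ℤ) := by
  have hB : qPochInf (X * q ^ K) q ≠ 0 := qPochInf_ne_zero hq1 (shift_ne hz K)
  rw [qPochInt, qPochInt, zpow_natCast, zpow_natCast,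
    show X * q ^ (j + K) = X * q ^ K * q ^ j by rw [pow_add]; ring]
  have h2 : qPochInf (X * q ^ K * q ^ j) q ≠ 0 :=
    qPochInf_ne_zero hq1 (shift_ne (shift_ne hz K) j)
  field_simp

lemma qPochInt_ne (hq0 : q ≠ 0) (hq1 : ‖q‖ < 1)
    (hz : ∀ i : ℕ, 1 - X * q ^ i ≠ 0) (n : ℕ) : qPochInt X q (n : ℤ) ≠ 0 := by
  rw [qPochInt, zpow_natCast]
  exact div_ne_zero (qPochInf_ne_zero hq1 hz) (qPochInf_ne_zero hq1 (shift_ne hz n))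

/-- Reindexing `ℤ × ℕ ≃ ℕ × ℕ` by `(k, j) ↦ (j + k⁺, j + k⁻)`. -/
def reindex : ℤ × ℕ ≃ ℕ × ℕ where
  toFun p := (p.2 + p.1.toNat, p.2 + (-p.1).toNat)
  invFun p := ((p.1 : ℤ) - (p.2 : ℤ), min p.1 p.2)
  left_inv := by rintro ⟨k, j⟩; simp only [Prod.mk.injEq]; constructor <;> omega
  right_inv := by rintro ⟨n, m⟩; simp only [Prod.mk.injEq]; constructor <;> omega

end ElectricAux

open ElectricAux

set_option maxHeartbeats 1600000 in
theorem electric_index_factorization_Nf2 (q a v : ℂ)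
    (hq0 : 0 < ‖q‖) (hq1 : ‖q‖ < 1)
    (hqa : ‖q‖ < ‖a‖) (ha : ‖a‖ < 1)
    (hv : v ≠ 0)
    (hv2 : ∀ m : ℤ, v ^ 2 ≠ q ^ m)
    (hav2 : ∀ m : ℤ, a / v ^ 2 ≠ q ^ m) :
    (∑' k : ℤ, a ^ |k| *
      ((qPochInf (q ^ (1 + |k|)) q * qPochInf (q ^ (1 + |k|) * v ^ 2) q *
        qPochInf a q * qPochInf (a / v ^ 2) q) /
       (qPochInf (v ^ (-2 : ℤ)) q * qPochInf (q ^ (1 + |k|) / a) q *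
        qPochInf (q ^ (1 + |k|) * v ^ 2 / a) q * qPochInf q q)) *
      ∑' n : ℕ,
        (qPochInt (q ^ (1 + |k|) / a) q n * qPochInt (q ^ (1 + |k|) * v ^ 2 / a) q n *
         qPochInt (q / a) q n * qPochInt (q * v ^ 2 / a) q n) /
        (qPochInt (q ^ (1 + |k|)) q n * qPochInt (q ^ (1 + |k|) * v ^ 2) q n *
         qPochInt (q * v ^ 2) q n * qPochInt q q n) * a ^ (2 * n))
    = (qPochInf (q * v ^ 2) q * qPochInf a q * qPochInf (a / v ^ 2) q) /
      (qPochInf (v ^ (-2 : ℤ)) q * qPochInf (q / a) q * qPochInf (q * v ^ 2 / a) q) *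
      phi21 (q * v ^ 2 / a) (q / a) (q * v ^ 2) q a ^ 2 := by
  have hqne : q ≠ 0 := by
    intro h; rw [h] at hq0; simp at hq0
  have hane : a ≠ 0 := by
    intro h; rw [h] at hqa; simp at hqa; exact absurd hqa (not_lt.mpr (norm_nonneg q))
  have hpow_le : ∀ j : ℕ, ‖q‖ ^ j ≤ 1 :=
    fun j => pow_le_one₀ (norm_nonneg q) hq1.le
  -- the "no pole" conditions for the various bases
  have Gq : ∀ j : ℕ, 1 - q * q ^ j ≠ 0 := by
    intro j h
    have h1 : q * q ^ j = 1 := (sub_eq_zero.mp h).symm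
    have h2 := congrArg norm h1
    rw [norm_mul, norm_pow, norm_one] at h2
    nlinarith [norm_nonneg q, hpow_le j]
  have GB : ∀ j : ℕ, 1 - q / a * q ^ j ≠ 0 := by
    intro j h
    have h1 : q / a * q ^ j = 1 := (sub_eq_zero.mp h).symm
    have h2 := congrArg norm h1
    rw [norm_mul, norm_div, norm_pow, norm_one] at h2
    have ha0 : 0 < ‖a‖ := hq0.trans hqa
    rw [div_mul_eq_mul_div, div_eq_one_iff_eq (ne_of_gt ha0)] at h2
    nlinarith [norm_nonneg q, hpow_le j]
  have GC : ∀ j : ℕ, 1 - q * v ^ 2 * q ^ j ≠ 0 := by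
    intro j h
    have h1 : q * v ^ 2 * q ^ j = 1 := (sub_eq_zero.mp h).symm
    refine hv2 (-(1 + j : ℕ) : ℤ) ?_
    rw [zpow_neg, zpow_natCast]
    have hm : v ^ 2 * q ^ (1 + j) = 1 := by rw [pow_add, pow_one]; linear_combination h1
    exact eq_inv_of_mul_eq_one_left (by linear_combination hm)
  have GA : ∀ j : ℕ, 1 - q * v ^ 2 / a * q ^ j ≠ 0 := by
    intro j h
    have h1 : q * v ^ 2 / a * q ^ j = 1 := (sub_eq_zero.mp h).symm
    refine hav2 ((1 + j : ℕ) : ℤ) ?_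
    rw [zpow_natCast]
    have hv2ne : v ^ 2 ≠ 0 := pow_ne_zero _ hv
    field_simp at h1 ⊢
    rw [pow_add, pow_one]
    linear_combination -h1
  have Gv : ∀ j : ℕ, 1 - v ^ (-2 : ℤ) * q ^ j ≠ 0 := by
    intro j h
    have h1 : v ^ (-2 : ℤ) * q ^ j = 1 := (sub_eq_zero.mp h).symm
    refine hv2 (j : ℤ) ?_
    rw [zpow_natCast]
    rw [zpow_neg, show (2 : ℤ) = ((2 : ℕ) : ℤ) by norm_num, zpow_natCast] at h1
    have hv2ne : v ^ 2 ≠ 0 := pow_ne_zero _ hv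
    field_simp at h1
    linear_combination -h1
  -- the summand of the hypergeometric series
  set u : ℕ → ℂ := fun n : ℕ =>
    qPochInt (q * v ^ 2 / a) q (n : ℤ) * qPochInt (q / a) q (n : ℤ) /
      (qPochInt q q (n : ℤ) * qPochInt (q * v ^ 2) q (n : ℤ)) * a ^ n with hu
  have hphi : phi21 (q * v ^ 2 / a) (q / a) (q * v ^ 2) q a = ∑' n : ℕ, u n := rfl
  have hune : ∀ n : ℕ, u n ≠ 0 := by
    intro n
    refine mul_ne_zero (div_ne_zero (mul_ne_zero ?_ ?_) (mul_ne_zero ?_ ?_)) (pow_ne_zero _ hane)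
    · exact qPochInt_ne hqne hq1 GA n
    · exact qPochInt_ne hqne hq1 GB n
    · exact qPochInt_ne hqne hq1 Gq n
    · exact qPochInt_ne hqne hq1 GC n
  have hrec : ∀ n : ℕ, u (n + 1) = u n *
      (a * ((1 - q * v ^ 2 / a * q ^ n) * (1 - q / a * q ^ n) /
        ((1 - q * q ^ n) * (1 - q * v ^ 2 * q ^ n)))) := by
    intro n
    have t1 : qPochInt q q (n : ℤ) ≠ 0 := qPochInt_ne hqne hq1 Gq n
    have t2 : qPochInt (q * v ^ 2) q (n : ℤ) ≠ 0 := qPochInt_ne hqne hq1 GC n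
    simp only [hu]
    rw [qPochInt_succ hqne hq1 GA n, qPochInt_succ hqne hq1 GB n,
      qPochInt_succ hqne hq1 Gq n, qPochInt_succ hqne hq1 GC n, pow_succ]
    field_simp [Gq n, GC n]
    ring
  have hUsum : Summable fun n : ℕ => ‖u n‖ := by
    have hq_pow : Tendsto (fun n : ℕ => q ^ n) atTop (𝓝 0) :=
      tendsto_pow_atTop_nhds_zero_of_norm_lt_one hq1
    have h1 : Tendsto (fun n : ℕ => 1 - q * v ^ 2 / a * q ^ n) atTop (𝓝 1) := by
      simpa using tendsto_const_nhds.sub (hq_pow.const_mul (q * v ^ 2 / a))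
    have h2 : Tendsto (fun n : ℕ => 1 - q / a * q ^ n) atTop (𝓝 1) := by
      simpa using tendsto_const_nhds.sub (hq_pow.const_mul (q / a))
    have h3 : Tendsto (fun n : ℕ => 1 - q * q ^ n) atTop (𝓝 1) := by
      simpa using tendsto_const_nhds.sub (hq_pow.const_mul q)
    have h4 : Tendsto (fun n : ℕ => 1 - q * v ^ 2 * q ^ n) atTop (𝓝 1) := by
      simpa using tendsto_const_nhds.sub (hq_pow.const_mul (q * v ^ 2))
    have hr : Tendsto (fun n : ℕ => a * ((1 - q * v ^ 2 / a * q ^ n) * (1 - q / a * q ^ n) /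
        ((1 - q * q ^ n) * (1 - q * v ^ 2 * q ^ n)))) atTop (𝓝 a) := by
      have := (((h1.mul h2).div (h3.mul h4) (by norm_num)).const_mul a)
      simpa using this
    have hratio : Tendsto
        (fun n : ℕ => ‖‖u (n + 1)‖‖ / ‖‖u n‖‖) atTop (𝓝 (‖a‖)) := by
      have heq : (fun n : ℕ => ‖‖u (n + 1)‖‖ / ‖‖u n‖‖) =
          fun n : ℕ => ‖a * ((1 - q * v ^ 2 / a * q ^ n) * (1 - q / a * q ^ n) /
            ((1 - q * q ^ n) * (1 - q * v ^ 2 * q ^ n)))‖ := by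
        funext n
        rw [Real.norm_of_nonneg (norm_nonneg _), Real.norm_of_nonneg (norm_nonneg _),
          hrec n, norm_mul]
        exact mul_div_cancel_left₀ _ (norm_ne_zero_iff.mpr (hune n))
      rw [heq]
      have := hr.norm
      simpa using this
    exact summable_of_ratio_test_tendsto_lt_one ha
      (Eventually.of_forall fun n => by simp [hune n]) hratio
  -- prefactor
  set P : ℂ := (qPochInf (q * v ^ 2) q * qPochInf a q * qPochInf (a / v ^ 2) q) /
      (qPochInf (v ^ (-2 : ℤ)) q * qPochInf (q / a) q * qPochInf (q * v ^ 2 / a) q) with hP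
  set w : ℕ × ℕ → ℂ := fun p => P * (u p.1 * u p.2) with hw
  have hW : Summable fun p : ℕ × ℕ => u p.1 * u p.2 :=
    summable_mul_of_summable_norm hUsum hUsum
  have hWsum : Summable w := by rw [hw]; exact hW.mul_left P
  have hWe : Summable (w ∘ reindex) := (Equiv.summable_iff reindex).mpr hWsum
  -- the term-by-term identity
  have TW : ∀ K j : ℕ,
      P * (u (j + K) * u j) =
      a ^ K *
        ((qPochInf (q * q ^ K) q * qPochInf (q * v ^ 2 * q ^ K) q *
          qPochInf a q * qPochInf (a / v ^ 2) q) /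
         (qPochInf (v ^ (-2 : ℤ)) q * qPochInf (q / a * q ^ K) q *
          qPochInf (q * v ^ 2 / a * q ^ K) q * qPochInf q q)) *
      ((qPochInt (q / a * q ^ K) q j * qPochInt (q * v ^ 2 / a * q ^ K) q j *
        qPochInt (q / a) q j * qPochInt (q * v ^ 2 / a) q j) /
       (qPochInt (q * q ^ K) q j * qPochInt (q * v ^ 2 * q ^ K) q j *
        qPochInt (q * v ^ 2) q j * qPochInt q q j) * a ^ (2 * j)) := by
    intro K j
    have FA : qPochInf (q * v ^ 2 / a) q ≠ 0 := qPochInf_ne_zero hq1 GA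
    have FB : qPochInf (q / a) q ≠ 0 := qPochInf_ne_zero hq1 GB
    have FC : qPochInf (q * v ^ 2) q ≠ 0 := qPochInf_ne_zero hq1 GC
    have Fq : qPochInf q q ≠ 0 := qPochInf_ne_zero hq1 Gq
    have Fv : qPochInf (v ^ (-2 : ℤ)) q ≠ 0 := qPochInf_ne_zero hq1 Gv
    have FAK : qPochInf (q * v ^ 2 / a * q ^ K) q ≠ 0 :=
      qPochInf_ne_zero hq1 (shift_ne GA K)
    have FBK : qPochInf (q / a * q ^ K) q ≠ 0 := qPochInf_ne_zero hq1 (shift_ne GB K)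
    have FCK : qPochInf (q * v ^ 2 * q ^ K) q ≠ 0 := qPochInf_ne_zero hq1 (shift_ne GC K)
    have FqK : qPochInf (q * q ^ K) q ≠ 0 := qPochInf_ne_zero hq1 (shift_ne Gq K)
    have tq : qPochInt q q (j : ℤ) ≠ 0 := qPochInt_ne hqne hq1 Gq j
    have tC : qPochInt (q * v ^ 2) q (j : ℤ) ≠ 0 := qPochInt_ne hqne hq1 GC j
    have tqK : qPochInt (q * q ^ K) q (j : ℤ) ≠ 0 :=
      qPochInt_ne hqne hq1 (shift_ne Gq K) j
    have tCK : qPochInt (q * v ^ 2 * q ^ K) q (j : ℤ) ≠ 0 :=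
      qPochInt_ne hqne hq1 (shift_ne GC K) j
    simp only [hu, hP]
    rw [qPochInt_split hqne GA hq1 K j, qPochInt_split hqne GB hq1 K j,
      qPochInt_split hqne Gq hq1 K j, qPochInt_split hqne GC hq1 K j,
      pow_add, two_mul, pow_add]
    have Fv' : qPochInf ((v ^ 2)⁻¹) q ≠ 0 := by
      rwa [show ((v : ℂ) ^ 2)⁻¹ = v ^ (-2 : ℤ) by rw [zpow_neg, zpow_two, pow_two]]
    have FAK' : qPochInf (q * v ^ 2 * q ^ K / a) q ≠ 0 := by
      rwa [show q * v ^ 2 * q ^ K / a = q * v ^ 2 / a * q ^ K by ring]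
    have FBK' : qPochInf (q * q ^ K / a) q ≠ 0 := by
      rwa [show q * q ^ K / a = q / a * q ^ K by ring]
    have Fv'' : qPochInf ((v ^ (2 : ℤ))⁻¹) q ≠ 0 := by rwa [← zpow_neg]
    simp only [div_mul_eq_mul_div, mul_div_assoc', div_div, div_div_eq_mul_div]
    rw [div_eq_div_iff
      (by simp [Fv, FB, FA, tq, tC, FAK, FBK, FqK, FCK, tqK, tCK, Fq, FC, Fv', FAK', FBK', Fv''])
      (by simp [Fv, FB, FA, tq, tC, FAK, FBK, FqK, FCK, tqK, tCK, Fq, FC, Fv', FAK', FBK', Fv''])]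
    ring
  -- the k-th term of the index equals the inner sum over j
  have MK : ∀ K : ℕ,
      (a ^ (K : ℤ) *
        ((qPochInf (q ^ (1 + (K : ℤ))) q * qPochInf (q ^ (1 + (K : ℤ)) * v ^ 2) q *
          qPochInf a q * qPochInf (a / v ^ 2) q) /
         (qPochInf (v ^ (-2 : ℤ)) q * qPochInf (q ^ (1 + (K : ℤ)) / a) q *
          qPochInf (q ^ (1 + (K : ℤ)) * v ^ 2 / a) q * qPochInf q q)) *
        ∑' n : ℕ,
          (qPochInt (q ^ (1 + (K : ℤ)) / a) q n * qPochInt (q ^ (1 + (K : ℤ)) * v ^ 2 / a) q n *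
           qPochInt (q / a) q n * qPochInt (q * v ^ 2 / a) q n) /
          (qPochInt (q ^ (1 + (K : ℤ))) q n * qPochInt (q ^ (1 + (K : ℤ)) * v ^ 2) q n *
           qPochInt (q * v ^ 2) q n * qPochInt q q n) * a ^ (2 * n))
      = ∑' j : ℕ, P * (u (j + K) * u j) := by
    intro K
    rw [show (q : ℂ) ^ (1 + (K : ℤ)) = q * q ^ K by
        rw [zpow_add₀ hqne, zpow_one, zpow_natCast]]
    rw [show q * q ^ K * v ^ 2 = q * v ^ 2 * q ^ K by ring,
      show q * q ^ K / a = q / a * q ^ K by ring]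
    rw [show q * v ^ 2 * q ^ K / a = q * v ^ 2 / a * q ^ K by ring]
    rw [zpow_natCast, ← tsum_mul_left]
    exact tsum_congr fun j => (TW K j).symm
  -- identify each term of the `ℤ`-indexed sum
  have hterm : ∀ k : ℤ,
      (a ^ |k| *
        ((qPochInf (q ^ (1 + |k|)) q * qPochInf (q ^ (1 + |k|) * v ^ 2) q *
          qPochInf a q * qPochInf (a / v ^ 2) q) /
         (qPochInf (v ^ (-2 : ℤ)) q * qPochInf (q ^ (1 + |k|) / a) q *
          qPochInf (q ^ (1 + |k|) * v ^ 2 / a) q * qPochInf q q)) *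
        ∑' n : ℕ,
          (qPochInt (q ^ (1 + |k|) / a) q n * qPochInt (q ^ (1 + |k|) * v ^ 2 / a) q n *
           qPochInt (q / a) q n * qPochInt (q * v ^ 2 / a) q n) /
          (qPochInt (q ^ (1 + |k|)) q n * qPochInt (q ^ (1 + |k|) * v ^ 2) q n *
           qPochInt (q * v ^ 2) q n * qPochInt q q n) * a ^ (2 * n))
      = ∑' j : ℕ, w (reindex (k, j)) := by
    intro k
    have hK : |k| = ((k.natAbs : ℕ) : ℤ) := Int.abs_eq_natAbs k
    rw [hK]
    have hw2 : ∀ j : ℕ, w (reindex (k, j)) = P * (u (j + k.natAbs) * u j) := by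
      intro j
      rcases le_or_gt 0 k with hk | hk
      · have h1 : k.toNat = k.natAbs := by omega
        have h2 : (-k).toNat = 0 := by omega
        simp only [hw, reindex, Equiv.coe_fn_mk, h1, h2, add_zero]
      · have h1 : k.toNat = 0 := by omega
        have h2 : (-k).toNat = k.natAbs := by omega
        simp only [hw, reindex, Equiv.coe_fn_mk, h1, h2, add_zero]
        ring
    rw [tsum_congr hw2]
    exact MK k.natAbs
  -- put everything together
  calc
    _ = ∑' k : ℤ, ∑' j : ℕ, w (reindex (k, j)) := tsum_congr hterm
    _ = ∑' p : ℤ × ℕ, w (reindex p) :=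
      (hWe.tsum_prod' fun k => hWe.prod_factor k).symm
    _ = ∑' p : ℕ × ℕ, w p := reindex.tsum_eq w
    _ = P * phi21 (q * v ^ 2 / a) (q / a) (q * v ^ 2) q a ^ 2 := by
      rw [pow_two, hphi, tsum_mul_tsum_of_summable_norm hUsum hUsum, ← tsum_mul_left]
end

section
/- (Factorization of the magnetic N_f = 2 index.) Let q, a, v be complex numbers with 0 < |q| < 1, |q| < |a| < 1, v ≠ 0, and suppose that none of v², av², a/v² is an integer power of q. Then [(av², a/v²; q)_∞ / (qv²/a, q/(av²); q)_∞] · Σ_{k∈ℤ} (q/a)^{|k|} · [(q^{1+|k|}, q^{1+|k|}v², q/a, q/(av²); q)_∞ / (v^{−2}, aq^{|k|}, aq^{|k|}v², q; q)_∞] · Σ_{n=0}^∞ [(aq^{|k|}, aq^{|k|}v², a, av²; q)_n / (q^{1+|k|}, q^{1+|k|}v², qv², q; q)_n] (q/a)^{2n} = (a/v², qv², q/a; q)_∞ / (qv²/a, v^{−2}, a; q)_∞ · [₂φ₁(av², a; qv²; q, q/a)]². -/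
open scoped BigOperators

open Filter Topology

lemma sub_one_ne {z q : ℂ} (hz : ∀ j : ℕ, z * q ^ j ≠ 1) (j : ℕ) : 1 - z * q ^ j ≠ 0 :=
  sub_ne_zero.mpr (Ne.symm (hz j))

lemma summable_log_aux {z q : ℂ} (hq : ‖q‖ < 1) (hz : ∀ j : ℕ, z * q ^ j ≠ 1) :
    Summable fun j : ℕ => Complex.log (1 - z * q ^ j) := by
  obtain ⟨N, hN⟩ : ∃ N : ℕ, ∀ j ≥ N, ‖z * q ^ j‖ ≤ 1/2 := by
    have h0 : Tendsto (fun j : ℕ => z * q ^ j) atTop (𝓝 0) := by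
      simpa using (tendsto_pow_atTop_nhds_zero_of_norm_lt_one (by simpa using hq)).const_mul z
    have h0' : Tendsto (fun j : ℕ => ‖z * q ^ j‖) atTop (𝓝 0) := by simpa using h0.norm
    exact eventually_atTop.mp (h0'.eventually (eventually_le_nhds (by norm_num : (0:ℝ) < 1/2)))
  rw [← summable_nat_add_iff N]
  apply Summable.of_norm
  have hgeo : Summable (fun j : ℕ => (3/2) * ‖z * q ^ N‖ * ‖q‖ ^ j) :=
    (summable_geometric_of_lt_one (norm_nonneg q) (by simpa using hq)).mul_left _
  refine hgeo.of_nonneg_of_le (fun _ => norm_nonneg _) (fun j => ?_)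
  have h1 : ‖z * q ^ (j + N)‖ ≤ 1/2 := hN _ (Nat.le_add_left _ _)
  have h2 := Complex.norm_log_one_add_half_le_self (z := -(z * q ^ (j+N))) (by simpa using h1)
  have h3 : (1 : ℂ) - z * q ^ (j + N) = 1 + -(z * q ^ (j+N)) := by ring
  rw [← h3, show ‖-(z * q ^ (j+N))‖ = ‖z * q ^ (j+N)‖ from norm_neg _] at h2
  refine h2.trans (le_of_eq ?_)
  rw [norm_mul, norm_mul, norm_pow, norm_pow, pow_add]
  ring

lemma multipliable_aux {z q : ℂ} (hq : ‖q‖ < 1) (hz : ∀ j : ℕ, z * q ^ j ≠ 1) :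
    Multipliable (fun j : ℕ => 1 - z * q ^ j) :=
  Complex.multipliable_of_summable_log (summable_log_aux hq hz)

lemma qPochInf_ne_zero {z q : ℂ} (hq : ‖q‖ < 1) (hz : ∀ j : ℕ, z * q ^ j ≠ 1) :
    qPochInf z q ≠ 0 := by
  have h := Complex.cexp_tsum_eq_tprod (fun j => sub_one_ne hz j) (summable_log_aux hq hz)
  rw [qPochInf, ← h]
  exact Complex.exp_ne_zero _

lemma shift_ne_one {z q : ℂ} (hz : ∀ j : ℕ, z * q ^ j ≠ 1) (s : ℕ) (j : ℕ) :
    (z * q ^ s) * q ^ j ≠ 1 := by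
  rw [mul_assoc, ← pow_add]; exact hz (s + j)

lemma qPochInf_split {z q : ℂ} (hq : ‖q‖ < 1) (hz : ∀ j : ℕ, z * q ^ j ≠ 1) (n : ℕ) :
    qPochInf z q = (∏ j ∈ Finset.range n, (1 - z * q ^ j)) * qPochInf (z * q ^ n) q := by
  have h1 : (∏ j ∈ Finset.range n, (1 - z * q ^ j)) * ∏' i : ℕ, (1 - z * q ^ (i + n))
      = ∏' i : ℕ, (1 - z * q ^ i) :=
    Multipliable.prod_mul_tprod_nat_mul' (k := n)
      ((multipliable_aux hq (shift_ne_one hz n)).congr fun j => by rw [pow_add]; ring)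
  rw [qPochInf, qPochInf, ← h1]
  congr 1
  exact tprod_congr fun j => by rw [pow_add]; ring

set_option maxHeartbeats 800000 in
lemma qPochInt_natCast {z q : ℂ} (hq : ‖q‖ < 1) (hz : ∀ j : ℕ, z * q ^ j ≠ 1) (n : ℕ) :
    qPochInt z q n = ∏ j ∈ Finset.range n, (1 - z * q ^ j) := by
  rw [qPochInt, zpow_natCast, qPochInf_split hq hz n, mul_div_assoc,
    div_self (qPochInf_ne_zero hq (fun j => shift_ne_one hz n j)), mul_one]

lemma prod_norm_le {z q : ℂ} (hq : ‖q‖ < 1) (n : ℕ) :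
    ‖∏ j ∈ Finset.range n, (1 - z * q ^ j)‖ ≤ Real.exp (‖z‖ * (1 - ‖q‖)⁻¹) := by
  have hq' : ‖q‖ < 1 := by simpa using hq
  calc ‖∏ j ∈ Finset.range n, (1 - z * q ^ j)‖
      = ∏ j ∈ Finset.range n, ‖1 - z * q ^ j‖ := norm_prod _ _
    _ ≤ ∏ j ∈ Finset.range n, Real.exp (‖z‖ * ‖q‖ ^ j) := by
        apply Finset.prod_le_prod (fun j _ => norm_nonneg _)
        intro j _
        calc ‖1 - z * q ^ j‖ ≤ ‖(1:ℂ)‖ + ‖z * q ^ j‖ := norm_sub_le _ _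
          _ = 1 + ‖z‖ * ‖q‖ ^ j := by rw [norm_one, norm_mul, norm_pow]
          _ ≤ Real.exp (‖z‖ * ‖q‖ ^ j) := by
              have := Real.add_one_le_exp (‖z‖ * ‖q‖ ^ j); linarith
    _ = Real.exp (∑ j ∈ Finset.range n, ‖z‖ * ‖q‖ ^ j) := (Real.exp_sum _ _).symm
    _ ≤ Real.exp (‖z‖ * (1 - ‖q‖)⁻¹) := by
        apply Real.exp_le_exp.mpr
        rw [← Finset.mul_sum]
        apply mul_le_mul_of_nonneg_left _ (norm_nonneg z)
        calc ∑ j ∈ Finset.range n, ‖q‖ ^ j ≤ ∑' j : ℕ, ‖q‖ ^ j :=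
              Summable.sum_le_tsum _ (fun j _ => by positivity)
                (summable_geometric_of_lt_one (norm_nonneg q) hq')
          _ = (1 - ‖q‖)⁻¹ := tsum_geometric_of_lt_one (norm_nonneg q) hq'

lemma exists_pos_le_norm_prod {z q : ℂ} (hq : ‖q‖ < 1)
    (hz : ∀ j : ℕ, z * q ^ j ≠ 1) :
    ∃ c : ℝ, 0 < c ∧ ∀ n, c ≤ ‖∏ j ∈ Finset.range n, (1 - z * q ^ j)‖ := by
  have hm := multipliable_aux hq hz
  have htend : Tendsto (fun n => ∏ j ∈ Finset.range n, (1 - z * q ^ j)) atTop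
      (𝓝 (qPochInf z q)) := hm.hasProd.tendsto_prod_nat
  have hL : 0 < ‖qPochInf z q‖ := norm_pos_iff.mpr (qPochInf_ne_zero hq hz)
  obtain ⟨N, hN⟩ := eventually_atTop.mp
    (htend.norm.eventually (eventually_ge_nhds (by linarith : ‖qPochInf z q‖/2 < ‖qPochInf z q‖)))
  have hpos : ∀ n, 0 < ‖∏ j ∈ Finset.range n, (1 - z * q ^ j)‖ := fun n =>
    norm_pos_iff.mpr (Finset.prod_ne_zero_iff.mpr fun j _ => sub_one_ne hz j)
  refine ⟨min (‖qPochInf z q‖/2) ((Finset.range (N+1)).inf' ⟨0, by simp⟩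
    (fun n => ‖∏ j ∈ Finset.range n, (1 - z * q ^ j)‖)), ?_, ?_⟩
  · exact lt_min (by linarith) ((Finset.lt_inf'_iff _).mpr fun n _ => hpos n)
  · intro n
    rcases le_or_gt N n with h | h
    · exact le_trans (min_le_left _ _) (hN n h)
    · exact le_trans (min_le_right _ _)
        (Finset.inf'_le _ (Finset.mem_range.mpr (by omega)))

lemma summable_norm_ratio_geom {w : ℂ} (hw : ‖w‖ < 1) {f : ℕ → ℂ} {C : ℝ}
    (hub : ∀ n, ‖f n‖ ≤ C) : Summable fun n => ‖f n * w ^ n‖ := by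
  refine Summable.of_nonneg_of_le (fun n => norm_nonneg _) (fun n => ?_)
    ((summable_geometric_of_lt_one (norm_nonneg w) (by simpa using hw)).mul_left C)
  rw [norm_mul, norm_pow]
  exact mul_le_mul_of_nonneg_right (hub n) (by positivity)

def pairEquiv : ℤ × ℕ ≃ ℕ × ℕ where
  toFun p := if 0 ≤ p.1 then (p.2 + p.1.natAbs, p.2) else (p.2, p.2 + p.1.natAbs)
  invFun p := ((p.1 : ℤ) - (p.2 : ℤ), min p.1 p.2)
  left_inv := by
    rintro ⟨k, n⟩
    dsimp only
    by_cases hk : 0 ≤ k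
    · rw [if_pos hk]; simp only [Prod.mk.injEq]; constructor <;> omega
    · rw [if_neg hk]; simp only [Prod.mk.injEq]; constructor <;> omega
  right_inv := by
    rintro ⟨m, n⟩
    dsimp only
    rcases le_or_gt (n : ℤ) m with h | h
    · rw [if_pos (by omega)]
      simp only [Prod.mk.injEq]
      constructor <;> omega
    · rw [if_neg (by omega)]
      simp only [Prod.mk.injEq]
      constructor <;> omega

set_option maxHeartbeats 2000000 in
lemma key_identity (q a v : ℂ) (hq0 : q ≠ 0) (ha0 : a ≠ 0) (hv0 : v ≠ 0) (K n : ℕ)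
    (h1 : qPochInf (q * v ^ 2 / a) q ≠ 0)
    (h2 : qPochInf (q / (a * v ^ 2)) q ≠ 0)
    (h3 : qPochInf ((v ^ 2)⁻¹) q ≠ 0)
    (h4 : qPochInf (a * q ^ K) q ≠ 0)
    (h5 : qPochInf (a * q ^ K * v ^ 2) q ≠ 0)
    (h6 : qPochInf q q ≠ 0)
    (h7 : qPochInf (a * q ^ K * q ^ n) q ≠ 0)
    (h8 : qPochInf (a * q ^ K * v ^ 2 * q ^ n) q ≠ 0)
    (h9 : qPochInf (a * q ^ n) q ≠ 0)
    (h10 : qPochInf (a * v ^ 2 * q ^ n) q ≠ 0)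
    (h11 : qPochInf (q ^ (1 + K)) q ≠ 0)
    (h12 : qPochInf (q ^ (1 + K) * q ^ n) q ≠ 0)
    (h13 : qPochInf (q ^ (1 + K) * v ^ 2) q ≠ 0)
    (h14 : qPochInf (q ^ (1 + K) * v ^ 2 * q ^ n) q ≠ 0)
    (h15 : qPochInf (q * v ^ 2) q ≠ 0)
    (h16 : qPochInf (q * v ^ 2 * q ^ n) q ≠ 0)
    (h17 : qPochInf (q * q ^ n) q ≠ 0)
    (h18 : qPochInf a q ≠ 0)
    (h19 : qPochInf (a * v ^ 2) q ≠ 0) :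
    ((qPochInf (a * v ^ 2) q * qPochInf (a / v ^ 2) q) /
      (qPochInf (q * v ^ 2 / a) q * qPochInf (q / (a * v ^ 2)) q) *
     ((q / a) ^ K *
      ((qPochInf (q ^ (1 + K)) q * qPochInf (q ^ (1 + K) * v ^ 2) q *
        qPochInf (q / a) q * qPochInf (q / (a * v ^ 2)) q) /
       (qPochInf ((v ^ 2)⁻¹) q * qPochInf (a * q ^ K) q *
        qPochInf (a * q ^ K * v ^ 2) q * qPochInf q q)))) *
    ((qPochInt (a * q ^ K) q n * qPochInt (a * q ^ K * v ^ 2) q n *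
      qPochInt a q n * qPochInt (a * v ^ 2) q n) /
     (qPochInt (q ^ (1 + K)) q n * qPochInt (q ^ (1 + K) * v ^ 2) q n *
      qPochInt (q * v ^ 2) q n * qPochInt q q n) * (q / a) ^ (2 * n))
    = (qPochInf (a / v ^ 2) q * qPochInf (q * v ^ 2) q * qPochInf (q / a) q) /
      (qPochInf (q * v ^ 2 / a) q * qPochInf ((v ^ 2)⁻¹) q * qPochInf a q) *
      (((qPochInt (a * v ^ 2) q n * qPochInt a q n) /
          (qPochInt q q n * qPochInt (q * v ^ 2) q n) * (q / a) ^ n) *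
       ((qPochInt (a * v ^ 2) q ((n + K : ℕ) : ℤ) * qPochInt a q ((n + K : ℕ) : ℤ)) /
          (qPochInt q q ((n + K : ℕ) : ℤ) * qPochInt (q * v ^ 2) q ((n + K : ℕ) : ℤ)) * (q / a) ^ (n + K))) := by
  simp only [qPochInt, zpow_natCast]
  rw [show a * q ^ (n + K) = a * q ^ K * q ^ n by ring,
      show a * v ^ 2 * q ^ (n + K) = a * q ^ K * v ^ 2 * q ^ n by ring,
      show q * q ^ (n + K) = q ^ (1 + K) * q ^ n by ring,
      show q * v ^ 2 * q ^ (n + K) = q ^ (1 + K) * v ^ 2 * q ^ n by ring]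
  set x1 := qPochInf (a * v ^ 2) q with e1
  set x2 := qPochInf (a / v ^ 2) q with e2
  set x3 := qPochInf (q * v ^ 2 / a) q with e3
  set x4 := qPochInf (q / (a * v ^ 2)) q with e4
  set x5 := qPochInf ((v ^ 2)⁻¹) q with e5
  set x6 := qPochInf (a * q ^ K) q with e6
  set x7 := qPochInf (a * q ^ K * v ^ 2) q with e7
  set x8 := qPochInf q q with e8
  set x9 := qPochInf (a * q ^ K * q ^ n) q with e9
  set x10 := qPochInf (a * q ^ K * v ^ 2 * q ^ n) q with e10
  set x11 := qPochInf (a * q ^ n) q with e11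
  set x12 := qPochInf (a * v ^ 2 * q ^ n) q with e12
  set x13 := qPochInf (q ^ (1 + K)) q with e13
  set x14 := qPochInf (q ^ (1 + K) * q ^ n) q with e14
  set x15 := qPochInf (q ^ (1 + K) * v ^ 2) q with e15
  set x16 := qPochInf (q ^ (1 + K) * v ^ 2 * q ^ n) q with e16
  set x17 := qPochInf (q * v ^ 2) q with e17
  set x18 := qPochInf (q * v ^ 2 * q ^ n) q with e18
  set x19 := qPochInf (q * q ^ n) q with e19
  set x20 := qPochInf a q with e20
  set x21 := qPochInf (q / a) q with e21
  clear_value x1 x2 x3 x4 x5 x6 x7 x8 x9 x10 x11 x12 x13 x14 x15 x16 x17 x18 x19 x20 x21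
  clear e1 e2 e3 e4 e5 e6 e7 e8 e9 e10 e11 e12 e13 e14 e15 e16 e17 e18 e19 e20 e21
  have hDL : (x3*x4) * a^K * (x5*x6*x7*x8) * (x9*x10*x11*x12) * (x13*x15*x17*x8) * a^(2*n) ≠ 0 := by
    apply_rules [mul_ne_zero, pow_ne_zero]
  have hDR : (x3*x5*x20) * (x11*x12*x8*x17) * a^n * (x9*x10*x8*x17) * a^(n+K) ≠ 0 := by
    apply_rules [mul_ne_zero, pow_ne_zero]
  simp only [div_mul_div_comm, div_div_eq_mul_div]
  calc _ = (x1*x2 * q^K * (x13*x15*x21*x4) * (x6*x7*x20*x1) * (x14*x16*x18*x19) * q^(2*n)) /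
        ((x3*x4) * a^K * (x5*x6*x7*x8) * (x9*x10*x11*x12) * (x13*x15*x17*x8) * a^(2*n)) := by
        ring
    _ = ((x2*x17*x21) * (x1*x20*x19*x18) * q^n * (x1*x20*x14*x16) * q^(n+K)) /
        ((x3*x5*x20) * (x11*x12*x8*x17) * a^n * (x9*x10*x8*x17) * a^(n+K)) := by
        rw [div_eq_div_iff hDL hDR]; ring
    _ = _ := by ring



lemma norm_lt_ne_one {z q : ℂ} (hz : ‖z‖ < 1) (hq : ‖q‖ ≤ 1) (j : ℕ) :
    z * q ^ j ≠ 1 := by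
  intro h
  have h1 : ‖z‖ * ‖q‖ ^ j = 1 := by
    have := congrArg norm h
    rwa [norm_mul, norm_pow, norm_one] at this
  have h2 : ‖q‖ ^ j ≤ 1 := pow_le_one₀ (norm_nonneg q) hq
  nlinarith [norm_nonneg z, norm_nonneg q, pow_nonneg (norm_nonneg q) j]


theorem magnetic_index_factorization_Nf2 (q a v : ℂ)
    (hq0 : 0 < ‖q‖) (hq1 : ‖q‖ < 1)
    (hqa : ‖q‖ < ‖a‖) (ha : ‖a‖ < 1)
    (hv : v ≠ 0)
    (hv2 : ∀ m : ℤ, v ^ 2 ≠ q ^ m)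
    (hav2p : ∀ m : ℤ, a * v ^ 2 ≠ q ^ m)
    (hav2 : ∀ m : ℤ, a / v ^ 2 ≠ q ^ m) :
    (qPochInf (a * v ^ 2) q * qPochInf (a / v ^ 2) q) /
      (qPochInf (q * v ^ 2 / a) q * qPochInf (q / (a * v ^ 2)) q) *
    (∑' k : ℤ, (q / a) ^ |k| *
      ((qPochInf (q ^ (1 + |k|)) q * qPochInf (q ^ (1 + |k|) * v ^ 2) q *
        qPochInf (q / a) q * qPochInf (q / (a * v ^ 2)) q) /
       (qPochInf (v ^ (-2 : ℤ)) q * qPochInf (a * q ^ |k|) q *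
        qPochInf (a * q ^ |k| * v ^ 2) q * qPochInf q q)) *
      ∑' n : ℕ,
        (qPochInt (a * q ^ |k|) q n * qPochInt (a * q ^ |k| * v ^ 2) q n *
         qPochInt a q n * qPochInt (a * v ^ 2) q n) /
        (qPochInt (q ^ (1 + |k|)) q n * qPochInt (q ^ (1 + |k|) * v ^ 2) q n *
         qPochInt (q * v ^ 2) q n * qPochInt q q n) * (q / a) ^ (2 * n))
    = (qPochInf (a / v ^ 2) q * qPochInf (q * v ^ 2) q * qPochInf (q / a) q) /
      (qPochInf (q * v ^ 2 / a) q * qPochInf (v ^ (-2 : ℤ)) q * qPochInf a q) *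
      phi21 (a * v ^ 2) a (q * v ^ 2) q (q / a) ^ 2 := by
  -- basic nonvanishing
  have hq0' : q ≠ 0 := by intro h; rw [h] at hq0; simp at hq0
  have ha0 : a ≠ 0 := by
    intro h; rw [h] at hqa; simp at hqa; exact absurd (lt_of_lt_of_le hq0 hqa.le) (lt_irrefl 0) 
  have hv20 : v ^ 2 ≠ 0 := pow_ne_zero _ hv
  have hvrw : v ^ (-2 : ℤ) = (v ^ 2)⁻¹ := by
    rw [show (-2 : ℤ) = -((2:ℕ):ℤ) by norm_num, zpow_neg, zpow_natCast]
  rw [hvrw]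
  -- base factor conditions
  have Fa : ∀ j : ℕ, a * q ^ j ≠ 1 := norm_lt_ne_one ha hq1.le
  have Fq : ∀ j : ℕ, q * q ^ j ≠ 1 := norm_lt_ne_one hq1 hq1.le
  have Fqa : ∀ j : ℕ, (q / a) * q ^ j ≠ 1 := by
    refine norm_lt_ne_one ?_ hq1.le
    rw [norm_div]
    exact (div_lt_one (lt_of_lt_of_le hq0 hqa.le)).mpr (hqa.trans_le (le_refl _))
  have Fav2 : ∀ j : ℕ, (a * v ^ 2) * q ^ j ≠ 1 := by
    intro j h
    exact hav2p (-(j:ℤ)) (by rw [zpow_neg, zpow_natCast]; exact eq_inv_of_mul_eq_one_right (by linear_combination h))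
  have Fadv2 : ∀ j : ℕ, (a / v ^ 2) * q ^ j ≠ 1 := by
    intro j h
    exact hav2 (-(j:ℤ)) (by rw [zpow_neg, zpow_natCast]; exact eq_inv_of_mul_eq_one_right (by linear_combination h))
  have Fqv2 : ∀ j : ℕ, (q * v ^ 2) * q ^ j ≠ 1 := by
    intro j h
    have h' : v ^ 2 * q ^ (1 + j) = 1 := by rw [pow_add, pow_one]; linear_combination h
    exact hv2 (-((1 + j : ℕ) : ℤ))
      (by rw [zpow_neg, zpow_natCast]; exact eq_inv_of_mul_eq_one_right (by linear_combination h'))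
  have Fqdav2 : ∀ j : ℕ, (q / (a * v ^ 2)) * q ^ j ≠ 1 := by
    intro j h
    have h' : a * v ^ 2 = q ^ (1 + j) := by
      field_simp at h
      rw [pow_add, pow_one]; linear_combination -h
    exact hav2p ((1 + j : ℕ) : ℤ) (by rw [zpow_natCast]; exact h')
  have Fqv2a : ∀ j : ℕ, (q * v ^ 2 / a) * q ^ j ≠ 1 := by
    intro j h
    have h' : a / v ^ 2 = q ^ (1 + j) := by
      field_simp at h ⊢
      rw [pow_add, pow_one]; linear_combination -h
    exact hav2 ((1 + j : ℕ) : ℤ) (by rw [zpow_natCast]; exact h')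
  have Fvi2 : ∀ j : ℕ, (v ^ 2)⁻¹ * q ^ j ≠ 1 := by
    intro j h
    have h' : v ^ 2 = q ^ j := by
      field_simp at h
      linear_combination -h
    exact hv2 (j : ℤ) (by rw [zpow_natCast]; exact h')
  -- nonvanishing helper
  have NZ : ∀ z : ℂ, (∀ j : ℕ, z * q ^ j ≠ 1) → qPochInf z q ≠ 0 :=
    fun z hz => qPochInf_ne_zero hq1 hz
  -- |q/a| < 1
  have hw : ‖q / a‖ < 1 := by
    rw [norm_div]
    exact (div_lt_one (lt_of_lt_of_le hq0 hqa.le)).mpr hqa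
  -- the phi21 summand
  set T : ℕ → ℂ := fun n =>
    (qPochInt (a * v ^ 2) q n * qPochInt a q n) /
      (qPochInt q q n * qPochInt (q * v ^ 2) q n) * (q / a) ^ n with hT_def
  have hphi : phi21 (a * v ^ 2) a (q * v ^ 2) q (q / a) = ∑' n, T n := rfl
  -- summability of ‖T‖
  obtain ⟨c3, hc3pos, hc3⟩ := exists_pos_le_norm_prod hq1 Fq
  obtain ⟨c4, hc4pos, hc4⟩ := exists_pos_le_norm_prod hq1 Fqv2
  have hub : ∀ n : ℕ, ‖(qPochInt (a * v ^ 2) q n * qPochInt a q n) /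
      (qPochInt q q n * qPochInt (q * v ^ 2) q n)‖ ≤
      Real.exp (‖a * v ^ 2‖ * (1 - ‖q‖)⁻¹) * Real.exp (‖a‖ * (1 - ‖q‖)⁻¹) / (c3 * c4) := by
    intro n
    rw [qPochInt_natCast hq1 Fav2 n, qPochInt_natCast hq1 Fa n, qPochInt_natCast hq1 Fq n,
      qPochInt_natCast hq1 Fqv2 n, norm_div, norm_mul, norm_mul]
    apply div_le_div₀ (by positivity)
      (mul_le_mul (prod_norm_le hq1 n) (prod_norm_le hq1 n) (norm_nonneg _)
        (Real.exp_pos _).le)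
      (by positivity)
      (mul_le_mul (hc3 n) (hc4 n) hc4pos.le (norm_nonneg _))
  have hTnorm : Summable fun n => ‖T n‖ := by
    simp only [hT_def]
    exact summable_norm_ratio_geom hw hub
  have hT2 : Summable (fun p : ℕ × ℕ => ‖T p.1 * T p.2‖) := hTnorm.mul_norm hTnorm
  have hTsum : Summable (fun p : ℕ × ℕ => T p.1 * T p.2) := hT2.of_norm
  -- the factor R and the doubly-indexed family
  set R : ℂ := (qPochInf (a / v ^ 2) q * qPochInf (q * v ^ 2) q * qPochInf (q / a) q) /
      (qPochInf (q * v ^ 2 / a) q * qPochInf ((v ^ 2)⁻¹) q * qPochInf a q) with hR_def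
  set G : ℕ × ℕ → ℂ := fun p => R * (T p.1 * T p.2) with hG_def
  set g : ℤ × ℕ → ℂ := fun p => R * (T p.2 * T (p.2 + p.1.natAbs)) with hg_def
  have hge : ∀ p : ℤ × ℕ, G (pairEquiv p) = g p := by
    rintro ⟨k, n⟩
    by_cases hk : 0 ≤ k
    · simp only [hG_def, hg_def, pairEquiv, Equiv.coe_fn_mk, if_pos hk]
      try ring
    · simp only [hG_def, hg_def, pairEquiv, Equiv.coe_fn_mk, if_neg hk]
      try ring
  have hG : Summable G := by
    simp only [hG_def]
    exact hTsum.mul_left R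
  have hg : Summable g := (pairEquiv.summable_iff.mpr hG).congr hge
  -- main chain
  rw [hphi, ← tsum_mul_left]
  have hconst : ∀ (c d : ℂ) (f : ℕ → ℂ), c * (d * ∑' n, f n) = ∑' n, (c * d) * f n := by
    intro c d f; rw [tsum_mul_left]; ring
  calc ∑' k : ℤ, (qPochInf (a * v ^ 2) q * qPochInf (a / v ^ 2) q) /
      (qPochInf (q * v ^ 2 / a) q * qPochInf (q / (a * v ^ 2)) q) *
      ((q / a) ^ |k| *
      ((qPochInf (q ^ (1 + |k|)) q * qPochInf (q ^ (1 + |k|) * v ^ 2) q *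
        qPochInf (q / a) q * qPochInf (q / (a * v ^ 2)) q) /
       (qPochInf ((v ^ 2)⁻¹) q * qPochInf (a * q ^ |k|) q *
        qPochInf (a * q ^ |k| * v ^ 2) q * qPochInf q q)) *
      ∑' n : ℕ,
        (qPochInt (a * q ^ |k|) q n * qPochInt (a * q ^ |k| * v ^ 2) q n *
         qPochInt a q n * qPochInt (a * v ^ 2) q n) /
        (qPochInt (q ^ (1 + |k|)) q n * qPochInt (q ^ (1 + |k|) * v ^ 2) q n *
         qPochInt (q * v ^ 2) q n * qPochInt q q n) * (q / a) ^ (2 * n))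
      = ∑' k : ℤ, ∑' n : ℕ, g (k, n) := by
        refine tsum_congr fun k => ?_
        set K := k.natAbs with hK_def
        rw [Int.abs_eq_natAbs k, ← hK_def]
        have hexp : q ^ ((1:ℤ) + (K:ℤ)) = q ^ (1 + K) := by
          rw [show (1:ℤ) + (K:ℤ) = ((1 + K : ℕ) : ℤ) by push_cast; ring, zpow_natCast]
        simp only [zpow_natCast, hexp]
        rw [hconst]
        refine tsum_congr fun n => ?_
        simp only [hg_def, hT_def, hR_def]
        exact key_identity q a v hq0' ha0 hv K n
          (NZ _ (fun j h => (shift_ne_one Fqv2a 0 j) (by linear_combination h)))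
          (NZ _ (fun j h => (shift_ne_one Fqdav2 0 j) (by linear_combination h)))
          (NZ _ (fun j h => (shift_ne_one Fvi2 0 j) (by linear_combination h)))
          (NZ _ (fun j h => (shift_ne_one Fa K j) (by linear_combination h)))
          (NZ _ (fun j h => (shift_ne_one Fav2 K j) (by linear_combination h)))
          (NZ _ (fun j h => (shift_ne_one Fq 0 j) (by linear_combination h)))
          (NZ _ (fun j h => (shift_ne_one Fa (K + n) j) (by linear_combination h)))
          (NZ _ (fun j h => (shift_ne_one Fav2 (K + n) j) (by linear_combination h)))
          (NZ _ (fun j h => (shift_ne_one Fa n j) (by linear_combination h)))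
          (NZ _ (fun j h => (shift_ne_one Fav2 n j) (by linear_combination h)))
          (NZ _ (fun j h => (shift_ne_one Fq K j) (by linear_combination h)))
          (NZ _ (fun j h => (shift_ne_one Fq (K + n) j) (by linear_combination h)))
          (NZ _ (fun j h => (shift_ne_one Fqv2 K j) (by linear_combination h)))
          (NZ _ (fun j h => (shift_ne_one Fqv2 (K + n) j) (by linear_combination h)))
          (NZ _ (fun j h => (shift_ne_one Fqv2 0 j) (by linear_combination h)))
          (NZ _ (fun j h => (shift_ne_one Fqv2 n j) (by linear_combination h)))
          (NZ _ (fun j h => (shift_ne_one Fq n j) (by linear_combination h)))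
          (NZ _ (fun j h => (shift_ne_one Fa 0 j) (by linear_combination h)))
          (NZ _ (fun j h => (shift_ne_one Fav2 0 j) (by linear_combination h)))
    _ = ∑' p : ℤ × ℕ, g p := (Summable.tsum_prod' hg (fun k => hg.prod_factor k)).symm
    _ = ∑' p : ℕ × ℕ, G p := by
        rw [← Equiv.tsum_eq pairEquiv G]
        exact tsum_congr fun p => (hge p).symm
    _ = R * (∑' n, T n) ^ 2 := by
        simp only [hG_def]
        rw [tsum_mul_left, ← tsum_mul_tsum_of_summable_norm hTnorm hTnorm, sq]
end
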